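/- arXiv:2311.15285 — 8 statements merged into one kernel-verified Lean document; each statement's English description precedes it below -/
import Mathlib

section
/- For all even nonnegative integers v₁ and all real m > 0: ∑_{q=1}^∞ (-1)^q/((q²+m²) q^{v₁}) = ((-1)^{v₁/2}/m^{v₁}) · (mπ/sinh(mπ) - 1)/(2m²) + ∑_{j=0}^{v₁/2 - 1} ((-1)^j/m^{2+2j}) (2^{1-(v₁-2j)} - 1) ζ(v₁ - 2j). -/
open Complex Real

noncomputable section

/-- Target Fourier coefficient -/
def cc (m : ℝ) (n : ℤ) : ℂ :=
  ((-1 : ℂ) ^ n * m * Real.sinh (m * π)) / (π * ((m:ℂ)^2 + (n:ℂ)^2))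

instance fact_two_pi : Fact (0 < 2 * π) := ⟨by positivity⟩

lemma fper (m : ℝ) : (fun x : ℝ => (Real.cosh (m * x) : ℂ)) (-π) =
    (fun x : ℝ => (Real.cosh (m * x) : ℂ)) (-π + 2 * π) := by
  have : Real.cosh (m * -π) = Real.cosh (m * (-π + 2 * π)) := by
    rw [show -π + 2*π = π by ring, show m * -π = -(m*π) by ring, Real.cosh_neg]
  simpa using congrArg (fun t : ℝ => (t : ℂ)) this

def FF (m : ℝ) : C(AddCircle (2 * π), ℂ) :=
  ⟨AddCircle.liftIco (2*π) (-π) (fun x : ℝ => (Real.cosh (m * x) : ℂ)),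
   AddCircle.liftIco_continuous (fper m)
     ((Complex.continuous_ofReal.comp (Real.continuous_cosh.comp
        (continuous_const.mul continuous_id))).continuousOn)⟩

lemma combine (a b u s t w : ℂ) (h1 : a - u ≠ 0) (h2 : -a - u ≠ 0)
    (key : (a-u)*(-a-u) = -(a^2+b^2)) (hab : a^2+b^2 ≠ 0) :
    (s*w - t*w)/(a-u)/2 + (t*w - s*w)/(-a-u)/2 = (s-t)*w*a/(a^2+b^2) := by
  have e1 : 1/(a-u) - 1/(-a-u) = 2*a/(a^2+b^2) := by
    rw [div_sub_div _ _ h1 h2, key, show 1*(-a-u) - (a-u)*1 = -(2*a) by ring, neg_div_neg_eq]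
  have e2 : (s*w - t*w)/(a-u)/2 + (t*w - s*w)/(-a-u)/2
      = (s-t)*w/2 * (1/(a-u) - 1/(-a-u)) := by
    field_simp
    ring
  rw [e2, e1]
  ring

lemma coeff_eq (m : ℝ) (hm : 0 < m) (n : ℤ) :
    fourierCoeff ((FF m : AddCircle (2*π) → ℂ)) n = cc m n := by
  have hπ : (π : ℝ) ≠ 0 := Real.pi_ne_zero
  have hc1 : (m:ℂ) - Complex.I * n ≠ 0 := by
    intro h
    have := congrArg Complex.re h
    simp at this
    exact hm.ne' this
  have hc2 : -(m:ℂ) - Complex.I * n ≠ 0 := by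
    intro h
    have := congrArg Complex.re h
    simp at this
    exact hm.ne' (by linarith)
  have hmn : (m:ℂ)^2 + (n:ℂ)^2 ≠ 0 := by
    have : ((m^2 + (n:ℝ)^2 : ℝ) : ℂ) = (m:ℂ)^2 + (n:ℂ)^2 := by push_cast; ring
    rw [← this]
    exact Complex.ofReal_ne_zero.mpr (by positivity)
  have h1 : fourierCoeff ((FF m : AddCircle (2*π) → ℂ)) n =
      fourierCoeffOn (by linarith [Real.pi_pos] : (-π) < -π + 2*π)
        (fun x : ℝ => (Real.cosh (m * x) : ℂ)) n :=
    fourierCoeff_liftIco_eq _ _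
  rw [h1, fourierCoeffOn_eq_integral]
  simp only [fourier_coe_apply, smul_eq_mul]
  rw [show (-π + 2*π - -π) = 2*π by ring, show (-π + 2*π) = π by ring]
  -- rewrite the integrand
  have hcong : Set.EqOn
      (fun x : ℝ => cexp (2 * ↑π * Complex.I * ((-n : ℤ):ℂ) * ↑x / ((2*π : ℝ):ℂ)) *
        ((Real.cosh (m * x) : ℝ) : ℂ))
      (fun x : ℝ => cexp ((↑m - Complex.I*↑n)*↑x)/2 + cexp ((-↑m - Complex.I*↑n)*↑x)/2)
      (Set.uIcc (-π) π) := by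
    intro x _
    have harg : 2 * (π:ℂ) * Complex.I * ((-n : ℤ):ℂ) * (x:ℂ) / ((2*π : ℝ):ℂ)
        = -(Complex.I*(n:ℂ)*(x:ℂ)) := by
      have hπC : (π : ℂ) ≠ 0 := Complex.ofReal_ne_zero.mpr hπ
      push_cast
      field_simp
    have t1 : cexp ((↑m - Complex.I*↑n)*(x:ℂ)) =
        cexp (-(Complex.I*(n:ℂ)*(x:ℂ))) * cexp ((m:ℂ)*(x:ℂ)) := by
      rw [← Complex.exp_add]; congr 1; ring
    have t2 : cexp ((-↑m - Complex.I*↑n)*(x:ℂ)) =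
        cexp (-(Complex.I*(n:ℂ)*(x:ℂ))) * cexp (-((m:ℂ)*(x:ℂ))) := by
      rw [← Complex.exp_add]; congr 1; ring
    simp only
    rw [harg, Complex.ofReal_cosh, Complex.cosh, t1, t2]
    push_cast
    ring
  rw [intervalIntegral.integral_congr hcong]
  have i1 : IntervalIntegrable (fun x : ℝ => cexp ((↑m - Complex.I*↑n)*↑x)/2)
      MeasureTheory.volume (-π) π :=
    (((Complex.continuous_exp.comp (continuous_const.mul
      Complex.continuous_ofReal))).div_const 2).intervalIntegrable _ _
  have i2 : IntervalIntegrable (fun x : ℝ => cexp ((-↑m - Complex.I*↑n)*↑x)/2)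
      MeasureTheory.volume (-π) π :=
    (((Complex.continuous_exp.comp (continuous_const.mul
      Complex.continuous_ofReal))).div_const 2).intervalIntegrable _ _
  rw [intervalIntegral.integral_add i1 i2, intervalIntegral.integral_div,
    intervalIntegral.integral_div, integral_exp_mul_complex hc1, integral_exp_mul_complex hc2]
  -- exponential evaluations
  have hw : cexp (Complex.I*(n:ℂ)*(π:ℂ)) = (-1:ℂ)^n := by
    rw [show Complex.I*(n:ℂ)*(π:ℂ) = (n:ℂ)*((π:ℂ)*Complex.I) by ring,
      Complex.exp_int_mul, Complex.exp_pi_mul_I]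
  have hw' : cexp (-(Complex.I*(n:ℂ)*(π:ℂ))) = (-1:ℂ)^n := by
    rw [show -(Complex.I*(n:ℂ)*(π:ℂ)) = ((-n : ℤ):ℂ)*((π:ℂ)*Complex.I) by push_cast; ring,
      Complex.exp_int_mul, Complex.exp_pi_mul_I, zpow_neg, ← inv_zpow, inv_neg, inv_one]
  have E1 : cexp (((m:ℂ) - Complex.I*↑n)*(π:ℂ)) = cexp ((m*π : ℝ):ℂ) * (-1:ℂ)^n := by
    rw [← hw', ← Complex.exp_add]; congr 1; push_cast; ring
  have E2 : cexp (((m:ℂ) - Complex.I*↑n)*((-π : ℝ):ℂ)) = cexp (-((m*π : ℝ):ℂ)) * (-1:ℂ)^n := by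
    rw [← hw, ← Complex.exp_add]; congr 1; push_cast; ring
  have E3 : cexp ((-(m:ℂ) - Complex.I*↑n)*(π:ℂ)) = cexp (-((m*π : ℝ):ℂ)) * (-1:ℂ)^n := by
    rw [← hw', ← Complex.exp_add]; congr 1; push_cast; ring
  have E4 : cexp ((-(m:ℂ) - Complex.I*↑n)*((-π : ℝ):ℂ)) = cexp ((m*π : ℝ):ℂ) * (-1:ℂ)^n := by
    rw [← hw, ← Complex.exp_add]; congr 1; push_cast; ring
  rw [Complex.ofReal_neg] at E2 E4 ⊢
  rw [E1, E2, E3, E4]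
  have key : ((m:ℂ) - Complex.I*↑n)*(-(m:ℂ) - Complex.I*↑n) = -((m:ℂ)^2+(n:ℂ)^2) := by
    linear_combination ((n:ℂ)^2) * Complex.I_sq
  rw [combine ((m:ℂ)) ((n:ℂ)) (Complex.I*↑n) (cexp ((m*π : ℝ):ℂ)) (cexp (-((m*π : ℝ):ℂ)))
    ((-1:ℂ)^n) hc1 hc2 key hmn]
  -- final algebra
  have hsinh : cexp ((m*π : ℝ):ℂ) - cexp (-((m*π : ℝ):ℂ)) = 2 * ((Real.sinh (m*π) : ℝ):ℂ) := by
    rw [Complex.ofReal_sinh, Complex.sinh]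
    ring
  rw [hsinh, cc]
  rw [real_smul]
  push_cast
  have hπC : (π : ℂ) ≠ 0 := Complex.ofReal_ne_zero.mpr hπ
  field_simp

lemma summable_cc (m : ℝ) (hm : 0 < m) : Summable (fun n : ℤ => cc m n) := by
  apply Summable.of_norm
  apply Summable.of_norm_bounded_eventually
    (g := fun n : ℤ => (m * |Real.sinh (m*π)| / π) * (1 / (n:ℝ)^2))
  · exact ((summable_one_div_int_pow.mpr one_lt_two).mul_left _)
  · filter_upwards [(Set.finite_singleton (0:ℤ)).eventually_cofinite_notMem] with n hn
    have hn0 : (n:ℝ) ≠ 0 := Int.cast_ne_zero.mpr (by simpa using hn)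
    have hden : (π:ℂ) * ((m:ℂ)^2 + (n:ℂ)^2) = ((π * (m^2 + (n:ℝ)^2) : ℝ) : ℂ) := by
      push_cast; ring
    have hnorm : ‖cc m n‖ = (m * |Real.sinh (m*π)|) / (π * (m^2 + (n:ℝ)^2)) := by
      rw [cc, hden, norm_div, norm_mul, norm_mul, norm_zpow]
      simp only [norm_neg, norm_one, one_zpow, one_mul, Complex.norm_real, Real.norm_eq_abs]
      rw [abs_of_pos (by positivity : (0:ℝ) < π * (m^2 + (n:ℝ)^2)), abs_of_pos hm]
    rw [norm_norm, hnorm]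
    rw [div_mul_eq_mul_div, mul_one_div, div_div]
    apply div_le_div_of_nonneg_left (by positivity) (by positivity)
    nlinarith [sq_nonneg (m : ℝ), Real.pi_pos, sq_nonneg (n:ℝ), _root_.sq_abs (n:ℝ)]

lemma hasSum_cc (m : ℝ) (hm : 0 < m) : HasSum (fun n : ℤ => cc m n) 1 := by
  have hsummable : Summable (fourierCoeff (FF m : AddCircle (2*π) → ℂ)) := by
    have h : fourierCoeff (FF m : AddCircle (2*π) → ℂ) = fun n => cc m n :=
      funext (coeff_eq m hm)
    rw [h]; exact summable_cc m hm
  have hps := has_pointwise_sum_fourier_series_of_summable hsummable (0 : AddCircle (2*π))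
  have hF0 : (FF m) (0 : AddCircle (2*π)) = 1 := by
    have h0 := AddCircle.liftIco_coe_apply (p := 2*π) (a := -π)
      (f := fun x : ℝ => (Real.cosh (m*x) : ℂ)) (x := 0)
      (by constructor <;> [linarith [Real.pi_pos]; linarith [Real.pi_pos]])
    simpa [FF] using h0
  rw [hF0] at hps
  refine hps.congr_fun fun n => ?_
  rw [coeff_eq m hm, fourier_eval_zero, smul_eq_mul, mul_one]

lemma hasSum_base (m : ℝ) (hm : 0 < m) :
    HasSum (fun q : ℕ => (-1:ℂ)^(q+1) / (((q:ℂ)+1)^2 + (m:ℂ)^2))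
      (((m * π * (1 / Real.sinh (m*π)) - 1) / (2*m^2) : ℝ) : ℂ) := by
  have hsinh : (0:ℝ) < Real.sinh (m*π) := Real.sinh_pos_iff.mpr (by positivity)
  have hsC : ((Real.sinh (m*π) : ℝ) : ℂ) ≠ 0 := Complex.ofReal_ne_zero.mpr hsinh.ne'
  have hπC : ((π:ℝ) : ℂ) ≠ 0 := Complex.ofReal_ne_zero.mpr Real.pi_ne_zero
  have hmC : ((m:ℝ) : ℂ) ≠ 0 := Complex.ofReal_ne_zero.mpr hm.ne'
  have hsym : ∀ n : ℕ, cc m (-(n:ℤ)) = cc m (n:ℤ) := by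
    intro n
    unfold cc
    rw [zpow_neg, ← inv_zpow, inv_neg, inv_one]
    push_cast
    ring_nf
  have hnat : HasSum (fun n : ℕ => 2 * cc m (n:ℤ)) (1 + cc m 0) := by
    refine ((hasSum_cc m hm).nat_add_neg).congr_fun fun n => ?_
    rw [hsym]; ring
  have h2 := (hasSum_nat_add_iff' (f := fun n : ℕ => 2 * cc m (n:ℤ)) 1).mpr hnat
  simp only [Finset.sum_range_one, Nat.cast_zero] at h2
  -- h2 : HasSum (fun n => 2 * cc m (n+1)) (1 + cc m 0 - 2 * cc m 0)
  have final := h2.mul_left ((π:ℂ) / (2 * m * Real.sinh (m*π)))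
  have hden : ∀ n : ℕ, ((m:ℂ)^2 + (((n:ℤ)+1 : ℤ):ℂ)^2) ≠ 0 := by
    intro n
    have : ((((n:ℤ)+1 : ℤ):ℂ))^2 + (m:ℂ)^2 = ((((n:ℝ)+1)^2 + m^2 : ℝ) : ℂ) := by push_cast; ring
    intro h
    apply Complex.ofReal_ne_zero.mpr (show ((n:ℝ)+1)^2 + m^2 ≠ 0 by positivity)
    rw [← this]
    linear_combination h
  have hsC' : Complex.sinh ((m:ℂ)*(π:ℂ)) ≠ 0 := by
    rw [← Complex.ofReal_mul, ← Complex.ofReal_sinh]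
    exact Complex.ofReal_ne_zero.mpr hsinh.ne'
  convert final using 1
  · rfl
  · funext n
    have hcast : ((-1:ℂ)) ^ ((n:ℤ)+1) = (-1:ℂ) ^ (n+1) := by
      rw [show (n:ℤ)+1 = ((n+1 : ℕ) : ℤ) by push_cast; ring, zpow_natCast]
    have hccn : cc m ((n:ℤ)+1) =
        (-1:ℂ)^(n+1) * m * ((Real.sinh (m*π) : ℝ):ℂ) / ((π:ℂ) * (((n:ℂ)+1)^2 + (m:ℂ)^2)) := by
      rw [cc, hcast]
      push_cast
      ring_nf
    have h1 : ((n:ℂ)+1)^2 + (m:ℂ)^2 ≠ 0 := by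
      have hEq : ((n:ℂ)+1)^2 + (m:ℂ)^2 = ((((n:ℝ)+1)^2 + m^2 : ℝ):ℂ) := by push_cast; ring
      rw [hEq]
      exact Complex.ofReal_ne_zero.mpr (by positivity)
    have hcast2 : ((n+1 : ℕ) : ℤ) = (n:ℤ)+1 := by push_cast; ring
    rw [hcast2, hccn]
    field_simp
  · have hcc0 : cc m 0 = m * ((Real.sinh (m*π) : ℝ):ℂ) / ((π:ℂ) * (m:ℂ)^2) := by
      rw [cc]
      push_cast
      ring_nf
    rw [hcc0, Complex.ofReal_div, Complex.ofReal_sub, Complex.ofReal_mul, Complex.ofReal_mul,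
      Complex.ofReal_one, Complex.ofReal_div, Complex.ofReal_one, Complex.ofReal_mul]
    push_cast
    field_simp
    ring

lemma hasSum_alt_zeta (k : ℕ) (hk : 2 ≤ k) :
    HasSum (fun n : ℕ => (-1 : ℂ) ^ n / (n : ℂ) ^ k)
      (((2 : ℂ) ^ ((1 : ℤ) - (k : ℤ)) - 1) * riemannZeta k) := by
  have hsum : Summable (fun n : ℕ => 1 / (n : ℂ) ^ k) := by
    rw [summable_norm_iff.symm]
    have : (fun n : ℕ => ‖1 / (n : ℂ) ^ k‖) = fun n : ℕ => 1 / (n : ℝ) ^ k := by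
      ext n; simp [norm_div, norm_pow]
    rw [this]
    exact Real.summable_one_div_nat_pow.mpr (by omega)
  have hZ : HasSum (fun n : ℕ => 1 / (n : ℂ) ^ k) (riemannZeta k) := by
    rw [zeta_nat_eq_tsum_of_gt_one (by omega)]
    exact hsum.hasSum
  set Z := riemannZeta k
  have h2 : HasSum (fun n : ℕ => 1 / ((2 * n : ℕ) : ℂ) ^ k) (((2 : ℂ) ^ k)⁻¹ * Z) := by
    have := hZ.mul_left ((2 : ℂ) ^ k)⁻¹
    refine this.congr_fun fun n => ?_
    push_cast
    rw [mul_pow]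
    field_simp
  have hinj : Function.Injective (fun n : ℕ => 2 * n) := fun a b h => by
    simp only [] at h; omega
  have heven : HasSum (fun n : ℕ => if Even n then 1 / (n : ℂ) ^ k else 0)
      (((2 : ℂ) ^ k)⁻¹ * Z) := by
    rw [← Function.Injective.hasSum_iff hinj ?_]
    · exact h2.congr_fun fun n => by simp
    · intro x hx
      have : ¬ Even x := by
        simp only [Set.mem_range] at hx
        rintro ⟨c, rfl⟩; exact hx ⟨c, by omega⟩
      simp [this]
  have key := (heven.mul_left 2).sub hZ
  have heq : (fun n : ℕ => 2 * (if Even n then 1 / (n : ℂ) ^ k else 0) - 1 / (n : ℂ) ^ k)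
      = fun n : ℕ => (-1 : ℂ) ^ n / (n : ℂ) ^ k := by
    ext n
    rcases Nat.even_or_odd n with h | h
    · rw [if_pos h, h.neg_one_pow]; ring
    · rw [if_neg (Nat.not_even_iff_odd.mpr h), h.neg_one_pow]; ring
  rw [heq] at key
  convert key using 1
  on_goal 1 => rfl
  have h2k : ((2 : ℂ) ^ ((1 : ℤ) - (k : ℤ))) = 2 * ((2 : ℂ) ^ k)⁻¹ := by
    rw [zpow_sub₀ (two_ne_zero), zpow_one, zpow_natCast]
    ring
  rw [h2k]; ring

/-- For all even nonnegative integers `v₁ = 2v` and all real `m > 0`: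
`∑_{q=1}^∞ (-1)^q/((q²+m²) q^{v₁}) = ((-1)^{v₁/2}/m^{v₁}) (mπ/sinh(mπ) - 1)/(2m²)
  + ∑_{j=0}^{v₁/2-1} ((-1)^j/m^{2+2j}) (2^{1-(v₁-2j)} - 1) ζ(v₁-2j)`. -/
theorem alternating_sum_one_div_sq_add_sq_mul_pow
    (v : ℕ) (m : ℝ) (hm : 0 < m) :
    ∑' q : ℕ, (-1 : ℂ) ^ (q + 1) /
        ((((q : ℂ) + 1) ^ 2 + (m : ℂ) ^ 2) * ((q : ℂ) + 1) ^ (2 * v)) =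
      ((-1 : ℂ) ^ v / (m : ℂ) ^ (2 * v)) *
        (((m * Real.pi * (1 / Real.sinh (m * Real.pi)) - 1) / (2 * m ^ 2) : ℝ) : ℂ)
      + ∑ j ∈ Finset.range v,
          ((-1 : ℂ) ^ j / (m : ℂ) ^ (2 + 2 * j)) *
            ((2 : ℂ) ^ ((1 : ℤ) - (2 * (v : ℤ) - 2 * (j : ℤ))) - 1) *
            riemannZeta ((2 * v - 2 * j : ℕ) : ℂ) := by
  have hmC : (m:ℂ) ≠ 0 := Complex.ofReal_ne_zero.mpr hm.ne'
  set C : ℂ := (((m * Real.pi * (1 / Real.sinh (m * Real.pi)) - 1) / (2 * m ^ 2) : ℝ) : ℂ)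
    with hCdef
  have key : ∀ V : ℕ, HasSum
      (fun q : ℕ => (-1:ℂ)^(q+1) / ((((q:ℂ)+1)^2 + (m:ℂ)^2) * ((q:ℂ)+1)^(2*V)))
      (((-1:ℂ)^V / (m:ℂ)^(2*V)) * C + ∑ j ∈ Finset.range V,
        ((-1:ℂ)^j / (m:ℂ)^(2+2*j)) * ((2:ℂ)^((1:ℤ) - (2*(V:ℤ) - 2*(j:ℤ))) - 1) *
          riemannZeta ((2*V - 2*j : ℕ) : ℂ)) := by
    intro V
    induction V with
    | zero =>
      simpa only [Nat.mul_zero, mul_zero, pow_zero, mul_one, Finset.range_zero,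
        Finset.sum_empty, add_zero, one_div_one, one_mul] using hasSum_base m hm
    | succ v ih =>
      have he := (hasSum_nat_add_iff'
        (f := fun n : ℕ => (-1:ℂ)^n / (n:ℂ)^(2*v+2)) 1).mpr
        (hasSum_alt_zeta (2*v+2) (by omega))
      simp only [Finset.sum_range_one, Nat.cast_zero, pow_zero] at he
      have he' : HasSum (fun n : ℕ => (-1:ℂ)^(n+1) / ((n:ℂ)+1)^(2*v+2))
          (((2:ℂ)^((1:ℤ) - ((2*v+2 : ℕ):ℤ)) - 1) * riemannZeta ((2*v+2 : ℕ):ℂ)) := by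
        have h1 := he.congr_fun
          (g := fun n : ℕ => (-1:ℂ)^(n+1) / ((n:ℂ)+1)^(2*v+2)) (fun n => by push_cast; ring)
        have h0 : (0:ℂ)^(2*v+2) = 0 := zero_pow (by omega)
        rw [h0, div_zero, sub_zero] at h1
        exact h1
      have hsum := (he'.sub ih).mul_left (1/(m:ℂ)^2)
      have hfun : ∀ q : ℕ,
          (-1:ℂ)^(q+1) / ((((q:ℂ)+1)^2+(m:ℂ)^2) * ((q:ℂ)+1)^(2*(v+1))) =
          (1/(m:ℂ)^2) * ((-1:ℂ)^(q+1)/((q:ℂ)+1)^(2*v+2) -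
            (-1:ℂ)^(q+1) / ((((q:ℂ)+1)^2+(m:ℂ)^2) * ((q:ℂ)+1)^(2*v))) := by
        intro q
        have hq : ((q:ℂ)+1) ≠ 0 := Nat.cast_add_one_ne_zero q
        have hs : ((q:ℂ)+1)^2 ≠ 0 := pow_ne_zero _ hq
        have hP : ((q:ℂ)+1)^(2*v) ≠ 0 := pow_ne_zero _ hq
        have hD : (((q:ℂ)+1)^2+(m:ℂ)^2) ≠ 0 := by
          have hEq : ((q:ℂ)+1)^2 + (m:ℂ)^2 = ((((q:ℝ)+1)^2 + m^2 : ℝ):ℂ) := by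
            push_cast; ring
          rw [hEq]
          exact Complex.ofReal_ne_zero.mpr (by positivity)
        have hpow : ((q:ℂ)+1)^(2*(v+1)) = ((q:ℂ)+1)^(2*v) * ((q:ℂ)+1)^2 := by
          rw [← pow_add]; congr 1 <;> ring
        have hpow2 : ((q:ℂ)+1)^(2*v+2) = ((q:ℂ)+1)^(2*v) * ((q:ℂ)+1)^2 := by
          rw [← pow_add]
        rw [hpow, hpow2]
        generalize ((q:ℂ)+1)^(2*v) = P at hP
        generalize hgen : ((q:ℂ)+1)^2 = s at hs hD
        field_simp
        ring
      have hval := hsum.congr_fun hfun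
      have hvalue : (1/(m:ℂ)^2) *
          ((((2:ℂ)^((1:ℤ) - ((2*v+2 : ℕ):ℤ)) - 1) * riemannZeta ((2*v+2 : ℕ):ℂ)) -
            (((-1:ℂ)^v / (m:ℂ)^(2*v)) * C + ∑ j ∈ Finset.range v,
              ((-1:ℂ)^j / (m:ℂ)^(2+2*j)) * ((2:ℂ)^((1:ℤ) - (2*(v:ℤ) - 2*(j:ℤ))) - 1) *
                riemannZeta ((2*v - 2*j : ℕ) : ℂ)))
          = ((-1:ℂ)^(v+1) / (m:ℂ)^(2*(v+1))) * C + ∑ j ∈ Finset.range (v+1),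
              ((-1:ℂ)^j / (m:ℂ)^(2+2*j)) *
                ((2:ℂ)^((1:ℤ) - (2*(((v+1):ℕ):ℤ) - 2*(j:ℤ))) - 1) *
                riemannZeta ((2*(v+1) - 2*j : ℕ) : ℂ) := by
        rw [Finset.sum_range_succ']
        have hstep : ∀ j ∈ Finset.range v,
            ((-1:ℂ)^(j+1) / (m:ℂ)^(2+2*(j+1))) *
              ((2:ℂ)^((1:ℤ) - (2*(((v+1):ℕ):ℤ) - 2*(((j+1):ℕ):ℤ))) - 1) *
              riemannZeta ((2*(v+1) - 2*(j+1) : ℕ) : ℂ)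
            = (-(1:ℂ)/(m:ℂ)^2) * (((-1:ℂ)^j / (m:ℂ)^(2+2*j)) *
              ((2:ℂ)^((1:ℤ) - (2*(v:ℤ) - 2*(j:ℤ))) - 1) *
              riemannZeta ((2*v - 2*j : ℕ) : ℂ)) := by
          intro j hj
          have hz : ((2*(v+1) - 2*(j+1) : ℕ) : ℂ) = ((2*v - 2*j : ℕ) : ℂ) := by
            congr 1; omega
          have hzexp : (1:ℤ) - (2*(((v+1):ℕ):ℤ) - 2*(((j+1):ℕ):ℤ))
              = (1:ℤ) - (2*(v:ℤ) - 2*(j:ℤ)) := by push_cast; ring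
          rw [hz, hzexp]
          have hmp : (m:ℂ)^(2+2*(j+1)) = (m:ℂ)^2 * (m:ℂ)^(2+2*j) := by
            rw [← pow_add]; congr 1 <;> ring
          rw [hmp]
          have hm2 : (m:ℂ)^2 ≠ 0 := pow_ne_zero _ hmC
          have hmj : (m:ℂ)^(2+2*j) ≠ 0 := pow_ne_zero _ hmC
          generalize (m:ℂ)^(2+2*j) = M at hmj
          field_simp
          ring
        rw [Finset.sum_congr rfl hstep, ← Finset.mul_sum]
        have h0z : ((2*(v+1) - 2*0 : ℕ) : ℂ) = ((2*v+2 : ℕ) : ℂ) := by congr 1 <;> omega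
        have h0e : (1:ℤ) - (2*(((v+1):ℕ):ℤ) - 2*(((0:ℕ)):ℤ)) = (1:ℤ) - ((2*v+2 : ℕ):ℤ) := by
          push_cast; ring
        rw [h0z, h0e]
        have hmp1 : (m:ℂ)^(2*(v+1)) = (m:ℂ)^2 * (m:ℂ)^(2*v) := by
          rw [← pow_add]; congr 1 <;> ring
        have hmp2 : (m:ℂ)^(2+2*0) = (m:ℂ)^2 := by norm_num
        rw [hmp1, hmp2]
        have hm2 : (m:ℂ)^2 ≠ 0 := pow_ne_zero _ hmC
        have hmv : (m:ℂ)^(2*v) ≠ 0 := pow_ne_zero _ hmC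
        generalize (m:ℂ)^(2*v) = M at hmv
        field_simp
        ring
      rw [hvalue] at hval
      exact hval
  exact (key v).tsum_eq
end
end

section
/- Let b ∈ ℕ_{>0} and k ∈ {0,…,b−1}. Define the lower-triangular matrices A, B of size (b−k+1)×(b−k+1), indexed by i,j ∈ {0,…,b−k}, by A_{ij} = C(2k+2i, i−j) for i ≥ j (0 otherwise), and B_{ij} = (−1)^{i−j} · 2(k+i)/(i−j)! · (2k+i+j−1)!/(2k+2j)! for i ≥ j (0 otherwise). Then B·A equals the identity matrix. -/
open Polynomial Finset

lemma alt_sum_poly : ∀ (m : ℕ) (p : ℚ[X]), p.degree < m →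
    ∑ t ∈ Finset.range (m+1), (-1:ℚ)^t * (m.choose t) * p.eval (t:ℚ) = 0 := by
  intro m
  induction m with
  | zero =>
    intro p hp
    have : p = 0 := by
      rw [Nat.cast_zero] at hp
      exact degree_eq_bot.mp (Nat.WithBot.lt_zero_iff.mp hp)
    simp [this]
  | succ m ih =>
    intro p hp
    have hp0 : p ≠ 0 → p.natDegree < m + 1 :=
      fun h0 => (natDegree_lt_iff_degree_lt h0).mpr hp
    have hr1 : (X + C (1:ℚ)).natDegree = 1 := natDegree_X_add_C 1
    set q : ℚ[X] := p.comp (X + C 1) - p with hq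
    have hqe : ∀ t : ℕ, q.eval (t:ℚ) = p.eval ((t:ℚ)+1) - p.eval (t:ℚ) := by
      intro t; simp [hq, eval_comp]
    have hqd : q.degree < m := by
      by_cases h0 : p = 0
      · rw [hq, h0]; simp
      · have hlc : (p.comp (X + C 1)).leadingCoeff = p.leadingCoeff := by
          rw [leadingCoeff_comp (by rw [hr1]; norm_num)]
          rw [(monic_X_add_C (1:ℚ)).leadingCoeff, one_pow, mul_one]
        have hc0 : p.comp (X + C 1) ≠ 0 := fun h => by
          rw [h, leadingCoeff_zero] at hlc
          exact h0 (leadingCoeff_eq_zero.mp hlc.symm)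
        have hdc : (p.comp (X + C 1)).degree = p.degree := by
          rw [degree_eq_natDegree hc0, degree_eq_natDegree h0, natDegree_comp, hr1, mul_one]
        have hlt := degree_sub_lt hdc hc0 hlc
        rw [hdc, ← hq] at hlt
        by_cases hq0 : q = 0
        · rw [hq0]; exact bot_lt_iff_ne_bot.mpr (by simp)
        · have h1 : q.natDegree < p.natDegree := natDegree_lt_natDegree hq0 hlt
          have := Nat.lt_of_lt_of_le h1 (Nat.lt_succ_iff.mp (hp0 h0))
          exact (natDegree_lt_iff_degree_lt hq0).mp this
    have key : ∑ t ∈ Finset.range (m+2), (-1:ℚ)^t * ((m+1).choose t) * p.eval (t:ℚ)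
        = - ∑ t ∈ Finset.range (m+1), (-1:ℚ)^t * (m.choose t) * q.eval (t:ℚ) := by
      rw [Finset.sum_range_succ' (fun t => (-1:ℚ)^t * ((m+1).choose t) * p.eval (t:ℚ)) (m+1)]
      have expand : ∀ t ∈ Finset.range (m+1),
          (-1:ℚ)^(t+1) * ((m+1).choose (t+1)) * p.eval ((t+1:ℕ):ℚ)
          = -((-1:ℚ)^t * (m.choose t) * p.eval ((t:ℚ)+1))
            + (-1:ℚ)^(t+1) * (m.choose (t+1)) * p.eval ((t+1:ℕ):ℚ) := by
        intro t _
        rw [Nat.choose_succ_succ]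
        push_cast
        ring
      rw [Finset.sum_congr rfl expand, Finset.sum_add_distrib]
      have shift : ∑ t ∈ Finset.range (m+1), (-1:ℚ)^(t+1) * (m.choose (t+1)) * p.eval ((t+1:ℕ):ℚ)
            + (-1:ℚ)^0 * ((m+1).choose 0) * p.eval ((0:ℕ):ℚ)
          = ∑ t ∈ Finset.range (m+1), (-1:ℚ)^t * (m.choose t) * p.eval ((t:ℕ):ℚ) := by
        have h2 := Finset.sum_range_succ' (fun t => (-1:ℚ)^t * (m.choose t) * p.eval ((t:ℕ):ℚ)) (m+1)
        rw [Finset.sum_range_succ] at h2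
        simp only [Nat.choose_succ_self, Nat.cast_zero, mul_zero, zero_mul, add_zero] at h2
        rw [h2]
        norm_num
      rw [add_assoc, shift, ← Finset.sum_add_distrib, ← Finset.sum_neg_distrib]
      exact Finset.sum_congr rfl fun t _ => by rw [hqe t]; push_cast; ring
    rw [show m + 1 + 1 = m + 2 from rfl, key, ih q hqd, neg_zero]

lemma fact_prod (a c : ℕ) : a.factorial * ∏ s ∈ Finset.range c, (a+1+s) = (a+c).factorial := by
  induction c with
  | zero => simp
  | succ c ih =>
    rw [Finset.prod_range_succ, ← mul_assoc, ih, show a + (c+1) = (a+c)+1 from rfl,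
      Nat.factorial_succ]
    ring

lemma key_sum (n m : ℕ) (hm : 1 ≤ m) (hmn : m ≤ n) :
    ∑ t ∈ Finset.range (m+1), (-1:ℚ)^(m-t) / (((m-t).factorial : ℚ) * (t.factorial : ℚ))
      * (((n+t-1).factorial : ℚ) / ((n-m+t).factorial : ℚ)) = 0 := by
  set P : ℚ[X] := ∏ s ∈ Finset.range (m-1), (X + C ((n-m+1+s : ℕ) : ℚ)) with hP
  have hPdeg : P.degree < m := by
    rw [hP, degree_prod]
    have : ∀ s ∈ Finset.range (m-1), (X + C ((n-m+1+s : ℕ) : ℚ)).degree = 1 :=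
      fun s _ => degree_X_add_C _
    rw [Finset.sum_congr rfl this]
    simp only [Finset.sum_const, Finset.card_range, nsmul_eq_mul, mul_one]
    exact_mod_cast (show m - 1 < m by omega)
  have hPeval : ∀ t : ℕ, P.eval (t:ℚ) * ((n-m+t).factorial : ℚ) = ((n+t-1).factorial : ℚ) := by
    intro t
    have h1 := fact_prod (n-m+t) (m-1)
    have h2 : n - m + t + (m-1) = n + t - 1 := by omega
    rw [h2] at h1
    have : P.eval (t:ℚ) = ((∏ s ∈ Finset.range (m-1), (n-m+t+1+s) : ℕ) : ℚ) := by
      rw [hP, eval_prod]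
      push_cast
      refine Finset.prod_congr rfl fun s _ => ?_
      simp only [eval_add, eval_X, eval_C]
      ring
    rw [this, ← Nat.cast_mul, mul_comm, h1]
  have halt := alt_sum_poly m P hPdeg
  have step : ∀ t ∈ Finset.range (m+1),
      (-1:ℚ)^(m-t) / (((m-t).factorial : ℚ) * (t.factorial : ℚ))
        * (((n+t-1).factorial : ℚ) / ((n-m+t).factorial : ℚ))
      = ((-1:ℚ)^m / (m.factorial : ℚ)) * ((-1:ℚ)^t * (m.choose t) * P.eval (t:ℚ)) := by
    intro t ht
    have htm : t ≤ m := Nat.lt_succ_iff.mp (Finset.mem_range.mp ht)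
    have hsign : (-1:ℚ)^(m-t) * (-1:ℚ)^t = (-1:ℚ)^m := by
      rw [← pow_add, Nat.sub_add_cancel htm]
    have hC : ((m.choose t : ℕ) : ℚ) * (t.factorial : ℚ) * ((m-t).factorial : ℚ)
        = (m.factorial : ℚ) := by
      exact_mod_cast congrArg (Nat.cast : ℕ → ℚ)
        (Nat.choose_mul_factorial_mul_factorial htm)
    have h1 : ((m-t).factorial : ℚ) ≠ 0 := Nat.cast_ne_zero.mpr (Nat.factorial_ne_zero _)
    have h2 : ((t).factorial : ℚ) ≠ 0 := Nat.cast_ne_zero.mpr (Nat.factorial_ne_zero _)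
    have h3 : ((m).factorial : ℚ) ≠ 0 := Nat.cast_ne_zero.mpr (Nat.factorial_ne_zero _)
    have h4 : ((n-m+t).factorial : ℚ) ≠ 0 := Nat.cast_ne_zero.mpr (Nat.factorial_ne_zero _)
    have ht2 : (-1:ℚ)^t * (-1:ℚ)^t = 1 := by
      rw [← pow_add]; exact Even.neg_one_pow ⟨t, rfl⟩
    have hsign' : (-1:ℚ)^(m-t) = (-1:ℚ)^m * (-1:ℚ)^t := by
      rw [← hsign, mul_assoc, ht2, mul_one]
    rw [← hPeval t, hsign', ← hC]
    have h5 : ((m.choose t : ℕ) : ℚ) ≠ 0 :=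
      Nat.cast_ne_zero.mpr (Nat.choose_pos htm).ne'
    field_simp
  rw [Finset.sum_congr rfl step, ← Finset.mul_sum, halt, mul_zero]

def Bfun (k i l : ℕ) : ℚ :=
  if l ≤ i then
    (if 2 * k + i + l = 0 then 1 else
      (-1 : ℚ) ^ (i - l) * (2 * (k + i) : ℚ)
        / (Nat.factorial (i - l) : ℚ)
        * (Nat.factorial (2 * k + i + l - 1) : ℚ)
        / (Nat.factorial (2 * k + 2 * l) : ℚ))
  else 0

def Afun (k l j : ℕ) : ℚ :=
  if j ≤ l then ((2 * k + 2 * l).choose (l - j) : ℚ) else 0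

lemma main_sum (k N i j : ℕ) (hi : i < N) (hj : j < N) :
    ∑ l ∈ Finset.range N, Bfun k i l * Afun k l j = if i = j then 1 else 0 := by
  rcases lt_trichotomy i j with hij | rfl | hij
  · rw [if_neg (by omega)]
    refine Finset.sum_eq_zero fun l _ => ?_
    rcases le_or_gt l i with h | h
    · rw [Afun, if_neg (by omega), mul_zero]
    · rw [Bfun, if_neg (by omega), zero_mul]
  · rw [if_pos rfl]
    rw [Finset.sum_eq_single_of_mem i (Finset.mem_range.mpr hi) (fun l _ hne => by
      rcases le_or_gt l i with h | h
      · rw [Afun, if_neg (by omega), mul_zero]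
      · rw [Bfun, if_neg (by omega), zero_mul])]
    rw [Afun, if_pos le_rfl, Nat.sub_self, Nat.choose_zero_right, Nat.cast_one, mul_one]
    rw [Bfun, if_pos le_rfl]
    by_cases h0 : 2 * k + i + i = 0
    · rw [if_pos h0]
    · rw [if_neg h0]
      have h1 : 2 * k + 2 * i = (2 * k + i + i - 1) + 1 := by omega
      have h2 : ((2 * k + i + i - 1).factorial : ℚ) ≠ 0 :=
        Nat.cast_ne_zero.mpr (Nat.factorial_ne_zero _)
      rw [Nat.sub_self, Nat.factorial_zero, h1, Nat.factorial_succ]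
      push_cast
      rw [div_eq_one_iff_eq (by positivity)]
      have : ((2 * k + i + i - 1 : ℕ) : ℚ) + 1 = 2 * ((k:ℚ) + i) := by
        have : (2 * k + i + i - 1 : ℕ) + 1 = 2 * (k + i) := by omega
        exact_mod_cast congrArg (Nat.cast : ℕ → ℚ) this
      rw [this]
      ring
  · -- j < i
    rw [if_neg (by omega)]
    set m := i - j with hm
    set n := 2 * k + i + j with hn
    have hm1 : 1 ≤ m := by omega
    have hmn : m ≤ n := by omega
    have hsub : Finset.range (i+1) ⊆ Finset.range N := by
      intro x hx; rw [Finset.mem_range] at *; omega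
    rw [← Finset.sum_subset hsub (fun l _ hl => by
      rw [Bfun, if_neg (by rw [Finset.mem_range] at hl; omega), zero_mul])]
    have hsplit : i + 1 = j + (m + 1) := by omega
    rw [hsplit, Finset.sum_range_add]
    have hz : ∑ l ∈ Finset.range j, Bfun k i l * Afun k l j = 0 :=
      Finset.sum_eq_zero fun l hl => by
        rw [Afun, if_neg (by rw [Finset.mem_range] at hl; omega), mul_zero]
    rw [hz, zero_add]
    have hterm : ∀ t ∈ Finset.range (m+1),
        Bfun k i (j+t) * Afun k (j+t) j
        = (2 * ((k:ℚ) + i)) * ((-1:ℚ)^(m-t) / (((m-t).factorial : ℚ) * (t.factorial : ℚ))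
            * (((n+t-1).factorial : ℚ) / ((n-m+t).factorial : ℚ))) := by
      intro t ht
      have htm : t ≤ m := Nat.lt_succ_iff.mp (Finset.mem_range.mp ht)
      rw [Bfun, if_pos (by omega), if_neg (by omega), Afun, if_pos (by omega)]
      have e1 : i - (j+t) = m - t := by omega
      have e2 : 2 * k + i + (j+t) - 1 = n + t - 1 := by omega
      have e3 : 2 * k + 2 * (j+t) = n - m + 2*t := by omega
      have e4 : j + t - j = t := by omega
      rw [e1, e2, e3, e4]
      have htle : t ≤ n - m + 2*t := by omega
      have hC : ((n-m+2*t).choose t : ℚ) * (t.factorial : ℚ) * ((n-m+t).factorial : ℚ)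
          = ((n-m+2*t).factorial : ℚ) := by
        have := Nat.choose_mul_factorial_mul_factorial htle
        rw [show n - m + 2*t - t = n - m + t by omega] at this
        exact_mod_cast congrArg (Nat.cast : ℕ → ℚ) this
      have h1 : ((m-t).factorial : ℚ) ≠ 0 := Nat.cast_ne_zero.mpr (Nat.factorial_ne_zero _)
      have h2 : ((t).factorial : ℚ) ≠ 0 := Nat.cast_ne_zero.mpr (Nat.factorial_ne_zero _)
      have h3 : ((n-m+t).factorial : ℚ) ≠ 0 := Nat.cast_ne_zero.mpr (Nat.factorial_ne_zero _)
      have h4 : ((n-m+2*t).factorial : ℚ) ≠ 0 := Nat.cast_ne_zero.mpr (Nat.factorial_ne_zero _)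
      rw [← hC]
      have h5 : ((n-m+2*t).choose t : ℚ) ≠ 0 := Nat.cast_ne_zero.mpr (Nat.choose_pos htle).ne'
      field_simp
    rw [Finset.sum_congr rfl hterm, ← Finset.mul_sum, key_sum n m hm1 hmn, mul_zero]

/-- Let `b ≥ 1` and `k ∈ {0,…,b−1}`. Define lower-triangular `(b−k+1)×(b−k+1)` matrices
`A_{ij} = C(2k+2i, i−j)` and
`B_{ij} = (−1)^{i−j} · 2(k+i)/(i−j)! · (2k+i+j−1)!/(2k+2j)!` for `i ≥ j`
(entries `0` for `i < j`; at the single degenerate corner `2k+i+j = 0`, where the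
formula reads `2·0·(−1)!/0!`, the entry is interpreted as its simplified value `1`,
as in the paper). Then `B·A` is the identity matrix. -/
theorem inverse_of_binomial_triangular_matrix (b k : ℕ) (hb : 0 < b) (hk : k ≤ b - 1) :
    let A : Matrix (Fin (b - k + 1)) (Fin (b - k + 1)) ℚ :=
      fun i j => if (j : ℕ) ≤ (i : ℕ) then
          ((2 * k + 2 * (i : ℕ)).choose ((i : ℕ) - (j : ℕ)) : ℚ)
        else 0
    let B : Matrix (Fin (b - k + 1)) (Fin (b - k + 1)) ℚ :=
      fun i j => if (j : ℕ) ≤ (i : ℕ) then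
          (if 2 * k + (i : ℕ) + (j : ℕ) = 0 then 1 else
            (-1 : ℚ) ^ ((i : ℕ) - (j : ℕ)) * (2 * (k + (i : ℕ)) : ℚ)
              / (Nat.factorial ((i : ℕ) - (j : ℕ)) : ℚ)
              * (Nat.factorial (2 * k + (i : ℕ) + (j : ℕ) - 1) : ℚ)
              / (Nat.factorial (2 * k + 2 * (j : ℕ)) : ℚ))
        else 0
    B * A = 1 := by
  intro A B
  ext i j
  rw [Matrix.mul_apply, Matrix.one_apply]
  have he : ∀ l : Fin (b - k + 1), B i l * A l j = Bfun k i l * Afun k l j := by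
    intro l
    rfl
  rw [Finset.sum_congr rfl (fun l _ => he l),
    Fin.sum_univ_eq_sum_range (fun l => Bfun k i l * Afun k l j),
    main_sum k _ i j i.isLt j.isLt]
  simp [Fin.ext_iff]
end

section
/- Fix integers b ≥ 1 and 0 ≤ k ≤ b−1. There exist real numbers d_k^{(k)},…,d_b^{(k)} (given explicitly by d_ℓ^{(k)} = C(2ℓ, ℓ−k)/(b+ℓ) + 2ℓ ∑_{m=0}^{ℓ−k−1} (−1)^{ℓ−k−m}/(b+k+m) · (k+ℓ+m−1)!/(m!(2k+m)!(ℓ−k−m)!)) such that for every even nonnegative integer n = 2q with k ≤ q ≤ b: (1/(q+b)) C(2q, q−k) = ∑_{ℓ=k}^{q} d_ℓ^{(k)} C(2q, q−ℓ). -/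
open Finset Polynomial


-- product of consecutive integers = ratio of factorials
lemma prod_consec (t s : ℕ) :
    t.factorial * ∏ u ∈ range s, (t + 1 + u) = (t + s).factorial := by
  induction s with
  | zero => simp
  | succ s ih =>
    rw [prod_range_succ, ← mul_assoc, ih]
    rw [show t + (s+1) = (t+s) + 1 by ring, Nat.factorial_succ]
    ring

lemma eval_fwdDiff (P : ℝ[X]) :
    fwdDiff (1:ℝ) (fun x => P.eval x) = fun x => (P.comp (X + 1) - P).eval x := by
  funext x; simp [fwdDiff, eval_comp]

lemma degree_comp_sub_lt (P : ℝ[X]) (n : ℕ) (h : P.degree < (n+1 : ℕ)) :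
    (P.comp (X + 1) - P).degree < (n : ℕ) := by
  by_cases h0 : P.comp (X + 1) - P = 0
  · rw [h0, degree_zero]; exact WithBot.bot_lt_coe n
  · have hP : P ≠ 0 := by
      rintro rfl; simp at h0
    have hcomp : P.comp (X + 1) = taylor 1 P := by
      rw [taylor_apply, map_one]
    have h0' : P.comp (X + 1) ≠ 0 := by
      rw [hcomp]
      intro hc
      exact hP (taylor_injective 1 (by simpa using hc))
    have hnd : (P.comp (X + 1)).natDegree = P.natDegree := by
      rw [hcomp, natDegree_taylor]
    have hdeg : (P.comp (X + 1)).degree = P.degree := by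
      rw [degree_eq_natDegree h0', degree_eq_natDegree hP, hnd]
    have hlc : (P.comp (X + 1)).leadingCoeff = P.leadingCoeff := by
      rw [show (X + 1 : ℝ[X]) = X + C 1 by simp,
        leadingCoeff_comp (by rw [natDegree_X_add_C]; exact one_ne_zero), leadingCoeff_X_add_C]
      simp
    have hlt := degree_sub_lt hdeg h0' hlc
    rw [hdeg] at hlt
    calc (P.comp (X + 1) - P).degree < P.degree := hlt
      _ ≤ (n : ℕ) := by
          rw [Polynomial.degree_eq_natDegree hP] at h ⊢
          exact_mod_cast Nat.lt_succ_iff.mp (by exact_mod_cast h)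

lemma fwdDiff_iter_poly_zero (P : ℝ[X]) (n : ℕ) (h : P.degree < (n : ℕ)) :
    (fwdDiff (1:ℝ))^[n] (fun x => P.eval x) = 0 := by
  induction n generalizing P with
  | zero =>
    have : P = 0 := by
      rcases eq_or_ne P 0 with rfl | hP
      · rfl
      · exact absurd h (by simp [Polynomial.degree_eq_natDegree hP])
    subst this; funext x; simp
  | succ n ih =>
    rw [Function.iterate_succ_apply, eval_fwdDiff]
    exact ih _ (degree_comp_sub_lt P n h)

lemma neg_one_pow_mul_self (n : ℕ) : (-1:ℝ)^n * (-1)^n = 1 := by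
  rw [← pow_add, show n+n=2*n by ring, pow_mul]; norm_num

lemma neg_one_pow_sub (a b : ℕ) (h : b ≤ a) : (-1:ℝ)^(a-b) = (-1)^a * (-1)^b := by
  obtain ⟨c, rfl⟩ := Nat.exists_eq_add_of_le h
  rw [Nat.add_sub_cancel_left]
  calc (-1:ℝ)^c = ((-1)^b*(-1)^b) * (-1)^c := by rw [neg_one_pow_mul_self, one_mul]
  _ = (-1)^(b+c) * (-1)^b := by rw [pow_add]; ring

lemma alt_sum_poly_s7 (P : ℝ[X]) (n : ℕ) (h : P.degree < (n : ℕ)) :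
    ∑ i ∈ range (n+1), (-1:ℝ)^i * (n.choose i) * P.eval ((i:ℕ) : ℝ) = 0 := by
  have key := fwdDiff_iter_eq_sum_shift (1:ℝ) (fun x => P.eval x) n 0
  rw [fwdDiff_iter_poly_zero P n h] at key
  have key2 : (0:ℝ) = ∑ i ∈ range (n+1), (-1:ℝ)^(n-i) * (n.choose i) * P.eval (i:ℝ) := by
    convert key using 2 with i hi
    push_cast
    simp [zsmul_eq_mul]
    simp only [zsmul_eq_mul, zero_add, nsmul_eq_mul, mul_one]
    push_cast
    try ring
  have : ∑ i ∈ range (n+1), (-1:ℝ)^i * (n.choose i) * P.eval (i:ℝ)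
      = (-1:ℝ)^n * ∑ i ∈ range (n+1), (-1:ℝ)^(n-i) * (n.choose i) * P.eval (i:ℝ) := by
    rw [mul_sum]
    refine sum_congr rfl fun i hi => ?_
    have hin : i ≤ n := Nat.lt_succ_iff.mp (mem_range.mp hi)
    rw [neg_one_pow_sub _ _ hin]
    linear_combination (-(-1:ℝ)^i * (n.choose i) * P.eval i) * neg_one_pow_mul_self n
  rw [this, ← key2, mul_zero]

lemma neg_one_pow_congr' (m n : ℕ) (h : m % 2 = n % 2) : (-1:ℝ)^m = (-1:ℝ)^n := by
  rw [← Nat.div_add_mod m 2, ← Nat.div_add_mod n 2, h, pow_add, pow_add, pow_mul, pow_mul]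
  norm_num

lemma core_sum (j q : ℕ) (hjq : j < q) :
    ((2*j).factorial : ℝ) * ((2*q).choose (q - j)) +
      ∑ ℓ ∈ Finset.Icc (j+1) q,
        (-1:ℝ)^(ℓ - j) * (2*ℓ) * (((ℓ + j - 1).factorial : ℝ) / ((ℓ - j).factorial : ℝ))
          * ((2*q).choose (q - ℓ)) = 0 := by
  set a : ℕ → ℝ := fun ℓ => ((ℓ+j).factorial : ℝ) / ((ℓ-j).factorial : ℝ) with ha
  set P : ℝ[X] := ∏ u ∈ range (2*j), (X - C ((q:ℝ) - j + 1 + u)) with hP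
  set f : ℕ → ℝ := fun i => (-1:ℝ)^i * ((2*q).choose i) * P.eval (i:ℝ) with hf
  -- degree of P
  have hfac_ne : ∀ u ∈ range (2*j), (X - C ((q:ℝ) - j + 1 + u)) ≠ 0 :=
    fun u _ => X_sub_C_ne_zero _
  have hPne : P ≠ 0 := prod_ne_zero_iff.mpr hfac_ne
  have hnd : P.natDegree = 2*j := by
    rw [hP, natDegree_prod _ _ hfac_ne]
    simp only [natDegree_X_sub_C, sum_const, card_range, smul_eq_mul, mul_one]
  have hdeg : P.degree < ((2*q : ℕ) : WithBot ℕ) := by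
    rw [degree_eq_natDegree hPne, hnd]
    exact_mod_cast (by omega : 2*j < 2*q)
  -- generic evaluation as a product
  have hev : ∀ x : ℝ, P.eval x = ∏ u ∈ range (2*j), (x - ((q:ℝ) - j + 1 + u)) := by
    intro x; rw [hP, eval_prod]; simp
  -- product-to-factorial conversion
  have hprod : ∀ ℓ : ℕ, j ≤ ℓ →
      ∏ u ∈ range (2*j), ((ℓ:ℝ) - j + 1 + u) = a ℓ := by
    intro ℓ hjl
    have key := prod_consec (ℓ - j) (2*j)
    have h2 : ℓ - j + 2*j = ℓ + j := by omega
    rw [h2] at key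
    have c1 : ∏ u ∈ range (2*j), ((ℓ:ℝ) - j + 1 + u)
        = ((∏ u ∈ range (2*j), (ℓ - j + 1 + u) : ℕ) : ℝ) := by
      push_cast [Nat.cast_sub hjl]
      try ring
    rw [c1, ha]
    have hne : ((ℓ-j).factorial : ℝ) ≠ 0 := by
      exact_mod_cast (Nat.factorial_pos _).ne'
    field_simp
    have key' : (∏ u ∈ range (2*j), (ℓ - j + 1 + u)) * (ℓ-j).factorial = (ℓ+j).factorial := by
      rw [mul_comm]; exact key
    exact_mod_cast key'
  -- evaluation facts
  have ev1 : ∀ ℓ : ℕ, j ≤ ℓ → ℓ ≤ q → P.eval (((q - ℓ : ℕ)):ℝ) = a ℓ := by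
    intro ℓ hjl hlq
    rw [hev]
    have : ∀ u ∈ range (2*j), (((q - ℓ:ℕ)):ℝ) - ((q:ℝ) - j + 1 + u)
        = (-1) * ((ℓ:ℝ) - j + 1 + u) := by
      intro u hu
      rw [Nat.cast_sub hlq]; ring
    rw [prod_congr rfl this, prod_mul_distrib, prod_const, hprod ℓ hjl, card_range, pow_mul]
    norm_num
  have ev2 : ∀ ℓ : ℕ, j ≤ ℓ → ℓ < q → P.eval (((q + ℓ + 1 : ℕ)):ℝ) = a ℓ := by
    intro ℓ hjl hlq
    rw [hev]
    have hrefl := Finset.prod_range_reflect (fun u => (ℓ:ℝ) - j + 1 + u) (2*j)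
    rw [← hprod ℓ hjl, ← hrefl]
    refine prod_congr rfl fun u hu => ?_
    have hu' : u < 2*j := mem_range.mp hu
    have : ((2*j - 1 - u : ℕ) : ℝ) = 2*(j:ℝ) - 1 - u := by
      have h1 : (1:ℕ) ≤ 2*j := by omega
      push_cast [Nat.cast_sub (by omega : u ≤ 2*j - 1), Nat.cast_sub h1]
      ring
    rw [this]
    push_cast
    ring
  have ev3 : ∀ i : ℕ, q - j < i → i < q + j + 1 → P.eval (i:ℝ) = 0 := by
    intro i h1 h2
    rw [hev]
    obtain ⟨u, hu, hi⟩ : ∃ u, u < 2*j ∧ i = q - j + 1 + u := ⟨i - (q-j+1), by omega, by omega⟩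
    refine prod_eq_zero (mem_range.mpr hu) ?_
    subst hi
    have : ((q - j + 1 + u : ℕ) : ℝ) = (q:ℝ) - j + 1 + u := by
      push_cast [Nat.cast_sub (by omega : j ≤ q)]; ring
    rw [this]; ring
  -- the alternating sum
  have T0 : ∑ i ∈ range (2*q+1), f i = 0 := alt_sum_poly_s7 P (2*q) hdeg
  -- split the sum
  have hsplit : ∑ i ∈ range (2*q+1), f i
      = (∑ i ∈ Ico 0 (q-j+1), f i) + (∑ i ∈ Ico (q-j+1) (q+j+1), f i)
        + (∑ i ∈ Ico (q+j+1) (2*q+1), f i) := by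
    rw [range_eq_Ico,
      ← Finset.sum_Ico_consecutive f (by omega : 0 ≤ q+j+1) (by omega : q+j+1 ≤ 2*q+1),
      ← Finset.sum_Ico_consecutive f (by omega : 0 ≤ q-j+1) (by omega : q-j+1 ≤ q+j+1)]
  have hmid : ∑ i ∈ Ico (q-j+1) (q+j+1), f i = 0 := by
    refine sum_eq_zero fun i hi => ?_
    rw [mem_Ico] at hi
    rw [hf]
    simp only
    rw [ev3 i (by omega) (by omega)]
    ring
  -- chunk 1
  have hchunk1 : ∑ i ∈ Ico 0 (q-j+1), f i
      = (∑ ℓ ∈ Finset.Icc (j+1) q, (-1:ℝ)^(q-ℓ) * ((2*q).choose (q-ℓ)) * a ℓ)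
        + (-1:ℝ)^(q-j) * ((2*q).choose (q-j)) * a j := by
    rw [show Ico 0 (q-j+1) = range (q-j+1) by rw [range_eq_Ico]]
    rw [Finset.sum_range_succ]
    congr 1
    · rw [← Finset.sum_range_reflect]
      rw [show Finset.Icc (j+1) q = Finset.Ico (j+1) (q+1) by rw [Finset.Ico_add_one_right_eq_Icc],
        Finset.sum_Ico_eq_sum_range]
      rw [show q + 1 - (j+1) = q - j by omega]
      refine sum_congr rfl fun i hi => ?_
      have hi' : i < q - j := mem_range.mp hi
      rw [hf]; simp only
      have e1 : q - j - 1 - i = q - (j + 1 + i) := by omega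
      have e2 : P.eval ((↑(q - (j+1+i)) : ℝ)) = a (j+1+i) := ev1 (j+1+i) (by omega) (by omega)
      rw [e1, e2]
    · rw [hf]; simp only
      rw [show (q - j : ℕ) = q - j from rfl, ev1 j (le_refl j) (by omega)]
  -- chunk 3
  have hchunk3 : ∑ i ∈ Ico (q+j+1) (2*q+1), f i
      = ∑ ℓ ∈ Finset.Icc (j+1) q, (-1:ℝ)^(q+ℓ) * ((2*q).choose (q-ℓ)) * a (ℓ-1) := by
    rw [Finset.sum_Ico_eq_sum_range, show 2*q + 1 - (q+j+1) = q - j by omega]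
    rw [show Finset.Icc (j+1) q = Finset.Ico (j+1) (q+1) by rw [Finset.Ico_add_one_right_eq_Icc],
      Finset.sum_Ico_eq_sum_range, show q + 1 - (j+1) = q - j by omega]
    refine sum_congr rfl fun i hi => ?_
    have hi' : i < q - j := mem_range.mp hi
    rw [hf]; simp only
    have e2 : P.eval ((↑(q + (j+i) + 1) : ℝ)) = a (j+i) := ev2 (j+i) (by omega) (by omega)
    have e3 : (2*q).choose (q+j+1+i) = (2*q).choose (q - (j+1+i)) := by
      rw [show q - (j+1+i) = 2*q - (q+j+1+i) by omega]
      exact (Nat.choose_symm (by omega)).symm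
    have e4 : (j+1+i) - 1 = j + i := by omega
    rw [show q+j+1+i = q + (j+i) + 1 by ring] at e3 ⊢
    rw [e2, e3, e4]
    have e5 : ((-1:ℝ))^(q + (j+i) + 1) = (-1:ℝ)^(q + (j+1+i)) := by
      rw [show q + (j+1+i) = q + (j+i) + 1 by ring]
    rw [e5]
  -- combine
  have hcomb : (0:ℝ)
      = (-1:ℝ)^(q-j) * ((2*q).choose (q-j)) * a j
        + ∑ ℓ ∈ Finset.Icc (j+1) q,
            ((-1:ℝ)^(q-ℓ) * a ℓ + (-1:ℝ)^(q+ℓ) * a (ℓ-1)) * ((2*q).choose (q-ℓ)) := by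
    rw [← T0, hsplit, hmid, hchunk1, hchunk3, add_zero, add_right_comm,
      ← Finset.sum_add_distrib, add_comm]
    congr 1
    refine sum_congr rfl fun ℓ hℓ => ?_
    ring
  -- identify with the goal
  have haj : a j = ((2*j).factorial : ℝ) := by
    rw [ha]; simp only
    rw [show j + j = 2*j by ring, show j - j = 0 by omega]
    simp [Nat.factorial]
  have hterm : ∀ ℓ ∈ Finset.Icc (j+1) q,
      ((-1:ℝ)^(q-ℓ) * a ℓ + (-1:ℝ)^(q+ℓ) * a (ℓ-1))
      = (-1:ℝ)^(q-j) * ((-1:ℝ)^(ℓ-j) * (2*ℓ) * (((ℓ + j - 1).factorial : ℝ) / ((ℓ - j).factorial : ℝ))) := by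
    intro ℓ hℓ
    rw [mem_Icc] at hℓ
    obtain ⟨t, rfl⟩ : ∃ t, ℓ = j + 1 + t := ⟨ℓ - j - 1, by omega⟩
    have hrec : a (j+1+t) + a (j+1+t-1)
        = 2*((j:ℝ)+1+t) * (((j+1+t + j - 1).factorial : ℝ) / (((j+1+t) - j).factorial : ℝ)) := by
      rw [ha]; simp only
      rw [show j+1+t-1 = j+t by omega, show j+1+t+j-1 = 2*j+t by omega,
        show j+1+t+j = 2*j+t+1 by ring, show j+1+t-j = t+1 by omega,
        show j+t+j = 2*j+t by ring, show j+t-j = t by omega]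
      rw [Nat.factorial_succ (2*j+t), Nat.factorial_succ t]
      have h1 : ((t.factorial : ℝ)) ≠ 0 := by exact_mod_cast (Nat.factorial_pos _).ne'
      have h2 : (((2*j+t).factorial : ℝ)) ≠ 0 := by exact_mod_cast (Nat.factorial_pos _).ne'
      have h3 : ((t:ℝ) + 1) ≠ 0 := by positivity
      field_simp
      push_cast
      ring
    have hsgn1 : (-1:ℝ)^(q-(j+1+t)) = (-1:ℝ)^(q+(j+1+t)) :=
      neg_one_pow_congr' _ _ (by omega)
    have hsgn2 : (-1:ℝ)^(q-j) * (-1:ℝ)^((j+1+t)-j) = (-1:ℝ)^(q+(j+1+t)) := by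
      rw [← pow_add]; exact neg_one_pow_congr' _ _ (by omega)
    rw [hsgn1, ← mul_add, hrec, ← hsgn2]
    push_cast
    ring
  have hfinal : (0:ℝ) = (-1:ℝ)^(q-j) *
      (((2*j).factorial : ℝ) * ((2*q).choose (q - j)) +
        ∑ ℓ ∈ Finset.Icc (j+1) q,
          (-1:ℝ)^(ℓ - j) * (2*ℓ) * (((ℓ + j - 1).factorial : ℝ) / ((ℓ - j).factorial : ℝ))
            * ((2*q).choose (q - ℓ))) := by
    rw [hcomb, mul_add, Finset.mul_sum]
    congr 1
    · rw [haj]; ring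
    · refine sum_congr rfl fun ℓ hℓ => ?_
      rw [hterm ℓ hℓ]
      ring
  have hne : ((-1:ℝ)^(q-j)) ≠ 0 := by
    apply pow_ne_zero; norm_num
  rcases mul_eq_zero.mp hfinal.symm with h | h
  · exact absurd h hne
  · exact h

/-- Fix integers `b ≥ 1` and `0 ≤ k ≤ b−1`. There exist real numbers
`d_k^{(k)},…,d_b^{(k)}`, given explicitly by
`d_ℓ^{(k)} = C(2ℓ, ℓ−k)/(b+ℓ) + 2ℓ ∑_{m=0}^{ℓ−k−1} (−1)^{ℓ−k−m}/(b+k+m)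
  · (k+ℓ+m−1)!/(m!(2k+m)!(ℓ−k−m)!)`,
such that for every even nonnegative integer `n = 2q` with `k ≤ q ≤ b`:
`(1/(q+b)) C(2q, q−k) = ∑_{ℓ=k}^{q} d_ℓ^{(k)} C(2q, q−ℓ)`. -/
theorem exists_coeffs_binomial_identity (b k : ℕ) (hb : 1 ≤ b) (hk : k ≤ b - 1) :
    ∃ d : ℕ → ℝ,
      (∀ ℓ : ℕ, k ≤ ℓ → ℓ ≤ b →
        d ℓ = ((2 * ℓ).choose (ℓ - k) : ℝ) / ((b : ℝ) + ℓ)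
          + 2 * (ℓ : ℝ) * ∑ m ∈ Finset.range (ℓ - k),
              (-1 : ℝ) ^ (ℓ - k - m) / ((b : ℝ) + k + m)
                * (Nat.factorial (k + ℓ + m - 1) : ℝ)
                / ((Nat.factorial m : ℝ) * (Nat.factorial (2 * k + m) : ℝ)
                    * (Nat.factorial (ℓ - k - m) : ℝ))) ∧
      (∀ q : ℕ, k ≤ q → q ≤ b →
        (1 / ((q : ℝ) + b)) * ((2 * q).choose (q - k) : ℝ)
          = ∑ ℓ ∈ Finset.Icc k q, d ℓ * ((2 * q).choose (q - ℓ) : ℝ)) := by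
  refine ⟨fun ℓ => ((2 * ℓ).choose (ℓ - k) : ℝ) / ((b : ℝ) + ℓ)
      + 2 * (ℓ : ℝ) * ∑ m ∈ Finset.range (ℓ - k),
          (-1 : ℝ) ^ (ℓ - k - m) / ((b : ℝ) + k + m)
            * (Nat.factorial (k + ℓ + m - 1) : ℝ)
            / ((Nat.factorial m : ℝ) * (Nat.factorial (2 * k + m) : ℝ)
                * (Nat.factorial (ℓ - k - m) : ℝ)),
    fun ℓ _ _ => rfl, ?_⟩
  intro q hkq hqb
  set u : ℕ → ℝ := fun ℓ => ((2*ℓ).choose (ℓ-k) : ℝ) / ((b:ℝ)+ℓ) * ((2*q).choose (q-ℓ)) with hu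
  set F : ℕ → ℕ → ℝ := fun ℓ j =>
      (-1:ℝ)^(ℓ-j) / ((b:ℝ)+j) * ((ℓ+j-1).factorial : ℝ)
        / (((j-k).factorial : ℝ) * ((j+k).factorial : ℝ) * ((ℓ-j).factorial : ℝ))
        * (2*(ℓ:ℝ)) * ((2*q).choose (q-ℓ)) with hF
  -- Step A : expand the right-hand side
  have stepA : ∑ ℓ ∈ Finset.Icc k q,
      (((2 * ℓ).choose (ℓ - k) : ℝ) / ((b : ℝ) + ℓ)
        + 2 * (ℓ : ℝ) * ∑ m ∈ Finset.range (ℓ - k),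
            (-1 : ℝ) ^ (ℓ - k - m) / ((b : ℝ) + k + m)
              * (Nat.factorial (k + ℓ + m - 1) : ℝ)
              / ((Nat.factorial m : ℝ) * (Nat.factorial (2 * k + m) : ℝ)
                  * (Nat.factorial (ℓ - k - m) : ℝ))) * ((2 * q).choose (q - ℓ) : ℝ)
      = ∑ ℓ ∈ Finset.Icc k q, (u ℓ + ∑ j ∈ Finset.Ico k ℓ, F ℓ j) := by
    refine sum_congr rfl fun ℓ hℓ => ?_
    rw [mem_Icc] at hℓ
    rw [add_mul, hu]
    congr 1
    rw [Finset.sum_Ico_eq_sum_range, Finset.mul_sum, Finset.sum_mul]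
    refine sum_congr rfl fun m hm => ?_
    have hm' : m < ℓ - k := mem_range.mp hm
    rw [hF]
    simp only
    rw [show ℓ - k - m = ℓ - (k+m) by omega, show k + ℓ + m - 1 = ℓ + (k+m) - 1 by omega,
      show 2*k + m = (k+m) + k by omega, show (k+m) - k = m by omega]
    push_cast
    ring
  -- Step B : swap the double sum
  have stepB : ∑ ℓ ∈ Finset.Icc k q, ∑ j ∈ Finset.Ico k ℓ, F ℓ j
      = ∑ j ∈ Finset.Ico k q, ∑ ℓ ∈ Finset.Icc (j+1) q, F ℓ j := by
    refine Finset.sum_comm' fun ℓ j => ?_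
    simp only [mem_Icc, mem_Ico]
    omega
  -- Step C : each inner sum equals -u j
  have stepC : ∀ j ∈ Finset.Ico k q, ∑ ℓ ∈ Finset.Icc (j+1) q, F ℓ j = - u j := by
    intro j hj
    rw [mem_Ico] at hj
    have hfac1 : (((j-k).factorial : ℝ)) ≠ 0 := by exact_mod_cast (Nat.factorial_pos _).ne'
    have hfac2 : (((j+k).factorial : ℝ)) ≠ 0 := by exact_mod_cast (Nat.factorial_pos _).ne'
    have hbj : ((b:ℝ)+j) ≠ 0 := by positivity
    have hinner : ∑ ℓ ∈ Finset.Icc (j+1) q, F ℓ j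
        = (1/((b:ℝ)+j)) * (1/(((j-k).factorial : ℝ) * ((j+k).factorial : ℝ)))
          * ∑ ℓ ∈ Finset.Icc (j+1) q,
              (-1:ℝ)^(ℓ - j) * (2*ℓ) * (((ℓ + j - 1).factorial : ℝ) / ((ℓ - j).factorial : ℝ))
                * ((2*q).choose (q - ℓ)) := by
      rw [Finset.mul_sum]
      refine sum_congr rfl fun ℓ hℓ => ?_
      rw [hF]
      simp only
      ring
    have hcore : ∑ ℓ ∈ Finset.Icc (j+1) q,
        (-1:ℝ)^(ℓ - j) * (2*ℓ) * (((ℓ + j - 1).factorial : ℝ) / ((ℓ - j).factorial : ℝ))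
          * ((2*q).choose (q - ℓ))
        = -(((2*j).factorial : ℝ) * ((2*q).choose (q - j))) := by
      linarith [core_sum j q hj.2]
    have hchoose : ((2*j).choose (j-k) : ℝ)
        = ((2*j).factorial : ℝ) / (((j-k).factorial : ℝ) * ((j+k).factorial : ℝ)) := by
      have h1 := Nat.choose_mul_factorial_mul_factorial (by omega : j - k ≤ 2*j)
      rw [show 2*j - (j-k) = j + k by omega] at h1
      have h1' : (2*j).choose (j-k) * ((j-k).factorial * (j+k).factorial) = (2*j).factorial := by
        rw [← mul_assoc]; exact h1
      field_simp
      exact_mod_cast h1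
    rw [hinner, hcore, hu]
    simp only
    rw [hchoose]
    ring
  -- Step D : telescoping
  have stepD : ∑ ℓ ∈ Finset.Icc k q, u ℓ = (∑ j ∈ Finset.Ico k q, u j) + u q := by
    rw [← Finset.Ico_add_one_right_eq_Icc, Finset.sum_Ico_succ_top hkq]
  rw [stepA, Finset.sum_add_distrib, stepB, Finset.sum_congr rfl stepC, stepD,
    Finset.sum_neg_distrib]
  rw [hu]
  simp only
  rw [Nat.sub_self, Nat.choose_zero_right]
  push_cast
  ring
end

section
/- Let a > c > 0, set r₀ := (a−c)/(a+c). Then (1/2)∫_{-π}^{π} log(a² cos²θ + c² sin²θ) · (c₀ + 2c₁ cos(2θ)) dθ = 2π(c₀ log((a+c)/2) + c₁ (a−c)/(a+c)) for all real constants c₀, c₁. -/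
open Real


lemma my_cosk (k : ℤ) (hk : k ≠ 0) :
    ∫ θ in (-π)..π, Real.cos (k * θ) = 0 := by
  have hk' : (k : ℝ) ≠ 0 := Int.cast_ne_zero.mpr hk
  rw [intervalIntegral.integral_comp_mul_left (fun x => Real.cos x) hk']
  simp [integral_cos, mul_neg, Real.sin_int_mul_pi]

lemma my_coskcos (n : ℕ) :
    ∫ θ in (-π)..π, Real.cos (2 * n * θ) * Real.cos (2 * θ)
      = if n = 1 then π else 0 := by
  have hident : ∀ θ : ℝ, Real.cos (2 * n * θ) * Real.cos (2 * θ)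
      = (Real.cos ((2 * (n:ℝ) - 2) * θ) + Real.cos ((2 * (n:ℝ) + 2) * θ)) / 2 := by
    intro θ
    have h1 : (2 * (n:ℝ) - 2) * θ = 2 * n * θ - 2 * θ := by ring
    have h2 : (2 * (n:ℝ) + 2) * θ = 2 * n * θ + 2 * θ := by ring
    rw [h1, h2, Real.cos_sub, Real.cos_add]; ring
  rw [intervalIntegral.integral_congr (g := fun θ =>
      (Real.cos ((2 * (n:ℝ) - 2) * θ) + Real.cos ((2 * (n:ℝ) + 2) * θ)) / 2)
    (fun θ _ => hident θ)]
  have hint1 : IntervalIntegrable (fun θ => Real.cos ((2 * (n:ℝ) - 2) * θ))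
      MeasureTheory.volume (-π) π := (Continuous.intervalIntegrable (by continuity) _ _)
  have hint2 : IntervalIntegrable (fun θ => Real.cos ((2 * (n:ℝ) + 2) * θ))
      MeasureTheory.volume (-π) π := (Continuous.intervalIntegrable (by continuity) _ _)
  rw [intervalIntegral.integral_div, intervalIntegral.integral_add hint1 hint2]
  have h2 : ∫ θ in (-π)..π, Real.cos ((2 * (n:ℝ) + 2) * θ) = 0 := by
    have : (2 * (n:ℝ) + 2) = ((2 * (n:ℤ) + 2 : ℤ) : ℝ) := by push_cast; ring
    rw [this, my_cosk _ (by omega)]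
  by_cases hn : n = 1
  · subst hn
    have h4 : Real.sin (4 * π) = 0 := by simpa using Real.sin_int_mul_pi 4
    norm_num [h2, h4]
  · have h1 : ∫ θ in (-π)..π, Real.cos ((2 * (n:ℝ) - 2) * θ) = 0 := by
      have : (2 * (n:ℝ) - 2) = ((2 * (n:ℤ) - 2 : ℤ) : ℝ) := by push_cast; ring
      rw [this, my_cosk _ (by omega)]
    simp [h1, h2, hn]

lemma my_hasSum_log (r : ℝ) (hr0 : 0 ≤ r) (hr1 : r < 1) (θ : ℝ) :
    HasSum (fun n : ℕ => 2 * ((-1 : ℝ) ^ (n + 1) * r ^ n / n) * Real.cos (2 * n * θ))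
      (Real.log (1 + 2 * r * Real.cos (2 * θ) + r ^ 2)) := by
  set z : ℂ := (r : ℂ) * Complex.exp ((2 * θ : ℝ) * Complex.I) with hz_def
  have hz : ‖z‖ < 1 := by
    rw [hz_def, norm_mul, Complex.norm_exp_ofReal_mul_I]
    simpa [abs_of_nonneg hr0] using hr1
  have H := Complex.hasSum_re (Complex.hasSum_taylorSeries_log hz)
  have hre : z.re = r * Real.cos (2 * θ) := by
    rw [hz_def, Complex.re_ofReal_mul, Complex.exp_ofReal_mul_I_re]
  have him : z.im = r * Real.sin (2 * θ) := by
    rw [hz_def, Complex.im_ofReal_mul, Complex.exp_ofReal_mul_I_im]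
  have habs : ‖1 + z‖ ^ 2 = 1 + 2 * r * Real.cos (2 * θ) + r ^ 2 := by
    rw [← Complex.normSq_eq_norm_sq, Complex.normSq_apply]
    simp only [Complex.add_re, Complex.add_im, Complex.one_re, Complex.one_im, hre, him]
    have := Real.sin_sq_add_cos_sq (2 * θ)
    nlinarith [this]
  have hterm : ∀ n : ℕ, ((-1 : ℂ) ^ (n + 1) * z ^ n / (n : ℂ)).re
      = ((-1 : ℝ) ^ (n + 1) * r ^ n / n) * Real.cos (2 * n * θ) := by
    intro n
    have hzn : z ^ n = (r : ℂ) ^ n * Complex.exp ((2 * n * θ : ℝ) * Complex.I) := by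
      rw [hz_def, mul_pow, ← Complex.exp_nat_mul]
      norm_num
      left
      push_cast
      ring
    have : (-1 : ℂ) ^ (n + 1) * z ^ n / (n : ℂ)
        = (((-1 : ℝ) ^ (n + 1) * r ^ n / n : ℝ) : ℂ) * Complex.exp ((2 * n * θ : ℝ) * Complex.I) := by
      rw [hzn]; push_cast; ring
    rw [this, Complex.re_ofReal_mul, Complex.exp_ofReal_mul_I_re]
  have hlogre : (Complex.log (1 + z)).re
      = (1 / 2) * Real.log (1 + 2 * r * Real.cos (2 * θ) + r ^ 2) := by
    rw [Complex.log_re, ← habs, Real.log_pow]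
    push_cast
    ring
  rw [hlogre] at H
  simp only [hterm] at H
  have h2 := H.mul_left 2
  have he : (2 : ℝ) * (1 / 2 * Real.log (1 + 2 * r * Real.cos (2 * θ) + r ^ 2))
      = Real.log (1 + 2 * r * Real.cos (2 * θ) + r ^ 2) := by ring
  rw [he] at h2
  have hf : (fun n : ℕ => 2 * ((-1 : ℝ) ^ (n + 1) * r ^ n / n) * Real.cos (2 * n * θ))
      = fun i : ℕ => 2 * ((-1 : ℝ) ^ (i + 1) * r ^ i / i * Real.cos (2 * i * θ)) := by
    funext n
    ring
  rw [hf]; exact h2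
lemma my_core (r : ℝ) (hr0 : 0 ≤ r) (hr1 : r < 1) (c₀ c₁ : ℝ) :
    ∫ θ in (-π)..π, Real.log (1 + 2 * r * Real.cos (2 * θ) + r ^ 2)
        * (c₀ + 2 * c₁ * Real.cos (2 * θ)) = 4 * π * r * c₁ := by
  set F : ℕ → ℝ → ℝ := fun n θ =>
    (2 * ((-1 : ℝ) ^ (n + 1) * r ^ n / n) * Real.cos (2 * n * θ))
      * (c₀ + 2 * c₁ * Real.cos (2 * θ)) with hF
  have key : HasSum (fun n : ℕ => ∫ θ in (-π)..π, F n θ)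
      (∫ θ in (-π)..π, Real.log (1 + 2 * r * Real.cos (2 * θ) + r ^ 2)
        * (c₀ + 2 * c₁ * Real.cos (2 * θ))) := by
    apply intervalIntegral.hasSum_integral_of_dominated_convergence
      (bound := fun n _ => 2 * r ^ n * (|c₀| + 2 * |c₁|))
    · intro n
      exact (Continuous.aestronglyMeasurable (by fun_prop))
    · intro n
      filter_upwards with θ _
      have hcos1 : |Real.cos (2 * n * θ)| ≤ 1 := Real.abs_cos_le_one _
      have hcos2 : |Real.cos (2 * θ)| ≤ 1 := Real.abs_cos_le_one _
      have hK : |2 * ((-1 : ℝ) ^ (n + 1) * r ^ n / n)| ≤ 2 * r ^ n := by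
        rcases n with _ | m
        · simp [pow_nonneg hr0]
        · rw [abs_mul, abs_div, abs_mul, abs_pow, abs_pow, abs_neg, abs_one, one_pow,
            one_mul, abs_of_nonneg hr0, Nat.abs_cast, abs_of_pos (by norm_num : (0:ℝ) < 2)]
          have h1 : (1 : ℝ) ≤ ((m : ℕ) + 1 : ℕ) := by exact_mod_cast Nat.succ_le_succ (Nat.zero_le m)
          have := div_le_self (pow_nonneg hr0 (m + 1)) h1
          nlinarith [pow_nonneg hr0 (m + 1)]
      have hw : |c₀ + 2 * c₁ * Real.cos (2 * θ)| ≤ |c₀| + 2 * |c₁| := by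
        calc |c₀ + 2 * c₁ * Real.cos (2 * θ)| ≤ |c₀| + |2 * c₁ * Real.cos (2 * θ)| := abs_add_le _ _
        _ ≤ |c₀| + 2 * |c₁| := by
            rw [abs_mul, abs_mul, abs_of_pos (by norm_num : (0:ℝ) < 2)]
            nlinarith [abs_nonneg c₁, abs_nonneg (Real.cos (2 * θ))]
      rw [hF]
      simp only [Real.norm_eq_abs]
      rw [abs_mul, abs_mul]
      calc |2 * ((-1 : ℝ) ^ (n + 1) * r ^ n / n)| * |Real.cos (2 * n * θ)|
            * |c₀ + 2 * c₁ * Real.cos (2 * θ)|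
          ≤ (2 * r ^ n) * 1 * (|c₀| + 2 * |c₁|) := by
            apply mul_le_mul (mul_le_mul hK hcos1 (abs_nonneg _) (by positivity)) hw
              (abs_nonneg _) (by positivity)
        _ = 2 * r ^ n * (|c₀| + 2 * |c₁|) := by ring
    · filter_upwards with θ _
      exact ((summable_geometric_of_lt_one hr0 hr1).mul_left 2).mul_right _
    · exact intervalIntegrable_const
    · filter_upwards with θ _
      exact (my_hasSum_log r hr0 hr1 θ).mul_right _
  have hFn : ∀ n : ℕ, (∫ θ in (-π)..π, F n θ) = if n = 1 then 4 * π * r * c₁ else 0 := by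
    intro n
    have hsplit : ∀ θ : ℝ, F n θ =
        (2 * ((-1 : ℝ) ^ (n + 1) * r ^ n / n) * c₀) * Real.cos (2 * n * θ)
        + (2 * ((-1 : ℝ) ^ (n + 1) * r ^ n / n) * (2 * c₁))
            * (Real.cos (2 * n * θ) * Real.cos (2 * θ)) := by
      intro θ; rw [hF]; ring
    rw [intervalIntegral.integral_congr (g := fun θ =>
        (2 * ((-1 : ℝ) ^ (n + 1) * r ^ n / n) * c₀) * Real.cos (2 * n * θ)
        + (2 * ((-1 : ℝ) ^ (n + 1) * r ^ n / n) * (2 * c₁))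
            * (Real.cos (2 * n * θ) * Real.cos (2 * θ))) (fun θ _ => hsplit θ)]
    rw [intervalIntegral.integral_add
      (((Continuous.intervalIntegrable (by fun_prop) _ _)))
      (((Continuous.intervalIntegrable (by fun_prop) _ _))),
      intervalIntegral.integral_const_mul, intervalIntegral.integral_const_mul, my_coskcos n]
    rcases n with _ | m
    · norm_num
    · have hcz : ∫ θ in (-π)..π, Real.cos (2 * ((m+1 : ℕ) : ℝ) * θ) = 0 := by
        have hcast : (2 * ((m+1 : ℕ) : ℝ)) = ((2 * ((m:ℤ)+1) : ℤ) : ℝ) := by push_cast; ring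
        rw [hcast, my_cosk _ (by omega)]
      rw [hcz]
      rcases eq_or_ne (m + 1) 1 with h1 | h1
      · rw [h1]; norm_num; ring
      · simp [h1, show m ≠ 0 by omega]
  have hsingle : HasSum (fun n : ℕ => if n = 1 then 4 * π * r * c₁ else 0) (4 * π * r * c₁) :=
    hasSum_ite_eq 1 _
  simp only [hFn] at key
  exact key.unique hsingle

/-- Let `a > c > 0`. Then for all real constants `c₀, c₁`:
`(1/2)∫_{-π}^{π} log(a² cos²θ + c² sin²θ)(c₀ + 2c₁ cos 2θ) dθ
  = 2π (c₀ log((a+c)/2) + c₁ (a−c)/(a+c))`. -/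
theorem integral_log_ellipse_density (a c : ℝ) (hc : 0 < c) (hca : c < a) (c₀ c₁ : ℝ) :
    (1 / 2) * ∫ θ in (-Real.pi)..Real.pi,
        Real.log (a ^ 2 * Real.cos θ ^ 2 + c ^ 2 * Real.sin θ ^ 2) *
          (c₀ + 2 * c₁ * Real.cos (2 * θ))
      = 2 * Real.pi * (c₀ * Real.log ((a + c) / 2) + c₁ * (a - c) / (a + c)) := by
  have hac : 0 < a + c := by linarith
  set r : ℝ := (a - c) / (a + c) with hr
  set L : ℝ := Real.log ((a + c) / 2) with hL
  have hr0 : 0 ≤ r := div_nonneg (by linarith) hac.le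
  have hr1 : r < 1 := by rw [hr, div_lt_one hac]; linarith
  have hu : ∀ θ : ℝ, 0 < 1 + 2 * r * Real.cos (2 * θ) + r ^ 2 := by
    intro θ
    nlinarith [Real.neg_one_le_cos (2 * θ), Real.cos_le_one (2 * θ), sq_nonneg (1 - r),
      sq_nonneg (1 + r)]
  have hpt : ∀ θ : ℝ, Real.log (a ^ 2 * Real.cos θ ^ 2 + c ^ 2 * Real.sin θ ^ 2)
      = 2 * L + Real.log (1 + 2 * r * Real.cos (2 * θ) + r ^ 2) := by
    intro θ
    have hs := Real.sin_sq_add_cos_sq θ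
    have hc2 : Real.cos (2 * θ) = 2 * Real.cos θ ^ 2 - 1 := Real.cos_two_mul θ
    have hid0 : a ^ 2 * Real.cos θ ^ 2 + c ^ 2 * Real.sin θ ^ 2
        = c ^ 2 + (a ^ 2 - c ^ 2) * Real.cos θ ^ 2 := by linear_combination c ^ 2 * hs
    have hid1 : ((a + c) / 2) ^ 2 * (1 + 2 * r * Real.cos (2 * θ) + r ^ 2)
        = c ^ 2 + (a ^ 2 - c ^ 2) * Real.cos θ ^ 2 := by
      rw [hc2, hr]
      field_simp
      ring
    have hid : a ^ 2 * Real.cos θ ^ 2 + c ^ 2 * Real.sin θ ^ 2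
        = ((a + c) / 2) ^ 2 * (1 + 2 * r * Real.cos (2 * θ) + r ^ 2) := by
      rw [hid0, hid1]
    rw [hid, Real.log_mul (by positivity) (ne_of_gt (hu θ)), hL]
    rw [show ((a + c) / 2) ^ 2 = ((a + c) / 2) ^ (2 : ℕ) from rfl, Real.log_pow]
    push_cast
    ring
  have hlogcont : Continuous fun θ : ℝ =>
      Real.log (1 + 2 * r * Real.cos (2 * θ) + r ^ 2) := by
    apply Continuous.log
    · fun_prop
    · intro θ; exact ne_of_gt (hu θ)
  have hint1 : IntervalIntegrable
      (fun θ : ℝ => (2 * L) * (c₀ + 2 * c₁ * Real.cos (2 * θ)))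
      MeasureTheory.volume (-π) π := Continuous.intervalIntegrable (by fun_prop) _ _
  have hint2 : IntervalIntegrable
      (fun θ : ℝ => Real.log (1 + 2 * r * Real.cos (2 * θ) + r ^ 2)
        * (c₀ + 2 * c₁ * Real.cos (2 * θ))) MeasureTheory.volume (-π) π :=
    Continuous.intervalIntegrable (by fun_prop) _ _
  have hcos2 : ∫ θ in (-π)..π, Real.cos (2 * θ) = 0 := by
    have : (2 : ℝ) = ((2 : ℤ) : ℝ) := by norm_num
    rw [this, my_cosk 2 (by norm_num)]
  have hw : ∫ θ in (-π)..π, (c₀ + 2 * c₁ * Real.cos (2 * θ)) = 2 * π * c₀ := by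
    rw [intervalIntegral.integral_add intervalIntegrable_const
      (Continuous.intervalIntegrable (by fun_prop) _ _),
      intervalIntegral.integral_const, intervalIntegral.integral_const_mul, hcos2]
    rw [smul_eq_mul, mul_zero]
    ring
  rw [intervalIntegral.integral_congr (g := fun θ =>
      (2 * L) * (c₀ + 2 * c₁ * Real.cos (2 * θ))
      + Real.log (1 + 2 * r * Real.cos (2 * θ) + r ^ 2)
        * (c₀ + 2 * c₁ * Real.cos (2 * θ)))
    (fun θ _ => by rw [hpt θ]; ring)]
  rw [intervalIntegral.integral_add hint1 hint2, intervalIntegral.integral_const_mul, hw,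
    my_core r hr0 hr1 c₀ c₁]
  rw [hr]
  field_simp
  ring
end

section
/- Let 0 < c ≤ a with constants a, c real, and let U be the ellipse {z ∈ ℂ : (Re z/a)² + (Im z/c)² < 1}. For every natural number n, ∫_U z^n d²z/π = 0 if n is odd, and if n is even it equals 2 α^{n/2} γ^{n/2} · (α²−γ²)/(n+2) · C(n, n/2), where α = (a+c)/2, γ = (a−c)/2, and C(n, n/2) is a binomial coefficient. -/
open MeasureTheory Set Complex Real

noncomputable def Tmap (a c : ℝ) : ℂ →L[ℝ] ℂ :=
  (a : ℂ) • (Complex.ofRealCLM.comp Complex.reCLM)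
    + ((c : ℂ) * Complex.I) • (Complex.ofRealCLM.comp Complex.imCLM)

lemma Tmap_apply (a c : ℝ) (z : ℂ) : Tmap a c z = (a * z.re : ℝ) + (c * z.im : ℝ) * Complex.I := by
  simp [Tmap]; ring

lemma Tmap_det (a c : ℝ) : (Tmap a c : ℂ →L[ℝ] ℂ).det = a * c := by
  have : LinearMap.toMatrix Complex.basisOneI Complex.basisOneI (Tmap a c : ℂ →ₗ[ℝ] ℂ)
      = !![a, 0; 0, c] := by
    ext i j
    fin_cases i <;> fin_cases j <;>
      simp [LinearMap.toMatrix_apply, Tmap_apply]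
  rw [ContinuousLinearMap.det, ← LinearMap.det_toMatrix Complex.basisOneI, this]
  simp [Matrix.det_fin_two_of]

lemma Tmap_image (a c : ℝ) (ha : 0 < a) (hc : 0 < c) :
    Tmap a c '' Metric.ball 0 1 = {z : ℂ | (z.re / a) ^ 2 + (z.im / c) ^ 2 < 1} := by
  ext w
  simp only [Set.mem_image, Metric.mem_ball, dist_zero_right, Set.mem_setOf_eq]
  constructor
  · rintro ⟨z, hz, rfl⟩
    rw [← Real.sqrt_one, Complex.norm_def,
      Real.sqrt_lt_sqrt_iff (Complex.normSq_nonneg z), Complex.normSq_apply] at hz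
    have h1 : (Tmap a c z).re = a * z.re := by simp [Tmap_apply]
    have h2 : (Tmap a c z).im = c * z.im := by simp [Tmap_apply]
    rw [h1, h2]
    field_simp
    nlinarith [sq_nonneg z.re, sq_nonneg z.im]
  · intro hw
    refine ⟨⟨w.re / a, w.im / c⟩, ?_, ?_⟩
    · rw [← Real.sqrt_one, Complex.norm_def,
        Real.sqrt_lt_sqrt_iff (Complex.normSq_nonneg _), Complex.normSq_apply]
      have := hw
      simp only [div_pow] at this
      calc w.re / a * (w.re / a) + w.im / c * (w.im / c)
          = w.re ^ 2 / a ^ 2 + w.im ^ 2 / c ^ 2 := by ring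
        _ < 1 := this
    · apply Complex.ext <;> simp [Tmap_apply] <;> field_simp

lemma exp_term_integral (m : ℤ) :
    ∫ θ in (-π : ℝ)..π, Complex.exp ((m : ℂ) * (θ * Complex.I))
      = if m = 0 then (2 * π : ℂ) else 0 := by
  rcases eq_or_ne m 0 with hm | hm
  · simp [hm, Complex.ofReal_neg]; ring
  · have hc : (m : ℂ) * Complex.I ≠ 0 := by
      simp [Complex.I_ne_zero, Int.cast_eq_zero, hm]
    have : ∀ θ : ℝ, (m : ℂ) * ((θ : ℂ) * Complex.I) = ((m : ℂ) * Complex.I) * (θ : ℝ) := by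
      intro θ; ring
    simp_rw [this]
    rw [integral_exp_mul_complex hc, if_neg hm]
    have h1 : ((m : ℂ) * Complex.I) * (π : ℂ) = (m : ℤ) * (Real.pi * Complex.I) := by push_cast; ring
    have h2 : ((m : ℂ) * Complex.I) * ((-π : ℝ) : ℂ) = (-m : ℤ) * (Real.pi * Complex.I) := by
      push_cast; ring
    rw [Complex.ofReal_neg] at h2 ⊢
    rw [h1, h2, Complex.exp_int_mul, Complex.exp_int_mul, Complex.exp_pi_mul_I]
    have : ((-1 : ℂ)) ^ (-m) = (-1 : ℂ) ^ m := by
      rw [zpow_neg]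
      rcases Int.even_or_odd m with h | h
      · rw [h.neg_one_zpow]; norm_num
      · rw [h.neg_one_zpow]; norm_num
    rw [this, sub_self, zero_div]

lemma angular_integral (α γ : ℝ) (n : ℕ) :
    ∫ θ in (-π : ℝ)..π, ((α : ℂ) * Complex.exp (θ * Complex.I)
        + (γ : ℂ) * Complex.exp (-(θ * Complex.I))) ^ n
      = if Even n then ((n.choose (n / 2) : ℂ) * (α : ℂ) ^ (n / 2) * (γ : ℂ) ^ (n / 2)
          * (2 * π)) else 0 := by
  have key : ∀ θ : ℝ, ((α : ℂ) * Complex.exp (θ * Complex.I)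
        + (γ : ℂ) * Complex.exp (-(θ * Complex.I))) ^ n
      = ∑ k ∈ Finset.range (n + 1), ((α : ℂ) ^ k * (γ : ℂ) ^ (n - k) * (n.choose k : ℂ))
          * Complex.exp ((((k : ℤ) - ((n - k : ℕ) : ℤ)) : ℂ) * (θ * Complex.I)) := by
    intro θ
    rw [add_pow]
    refine Finset.sum_congr rfl fun k hk => ?_
    rw [mul_pow, mul_pow, ← Complex.exp_nat_mul, ← Complex.exp_nat_mul, show
      ((α:ℂ) ^ k * Complex.exp (k * (θ * Complex.I)) * ((γ:ℂ) ^ (n-k) * Complex.exp ((n-k : ℕ) * -(θ * Complex.I))) * (n.choose k : ℂ))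
        = ((α:ℂ) ^ k * (γ:ℂ) ^ (n-k) * (n.choose k : ℂ)) * (Complex.exp (k * (θ * Complex.I)) * Complex.exp ((n-k:ℕ) * -(θ * Complex.I))) by ring,
      ← Complex.exp_add]
    congr 2
    push_cast
    ring
  simp_rw [key]
  rw [intervalIntegral.integral_finset_sum]
  · have : ∀ k ∈ Finset.range (n + 1),
        (∫ θ in (-π : ℝ)..π, ((α : ℂ) ^ k * (γ : ℂ) ^ (n - k) * (n.choose k : ℂ))
          * Complex.exp ((((k : ℤ) - ((n - k : ℕ) : ℤ)) : ℂ) * (θ * Complex.I)))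
        = ((α : ℂ) ^ k * (γ : ℂ) ^ (n - k) * (n.choose k : ℂ))
          * (if ((k : ℤ) - ((n - k : ℕ) : ℤ)) = 0 then (2 * π : ℂ) else 0) := by
      intro k _
      rw [intervalIntegral.integral_const_mul]
      congr 1
      exact_mod_cast exp_term_integral ((k : ℤ) - ((n - k : ℕ) : ℤ))
    rw [Finset.sum_congr rfl this]
    rcases Nat.even_or_odd n with hn | hn
    · rw [if_pos hn]
      obtain ⟨m, hm⟩ := hn
      have hmn : n / 2 = m := by omega
      rw [Finset.sum_eq_single m]
      · have hcond : ((m : ℤ) - ((n - m : ℕ) : ℤ)) = 0 := by omega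
        rw [if_pos hcond, hmn]
        have : n - m = m := by omega
        rw [this]
        ring
      · intro k hk hkm
        have : ¬ ((k : ℤ) - ((n - k : ℕ) : ℤ)) = 0 := by
          simp only [Finset.mem_range] at hk; omega
        rw [if_neg this, mul_zero]
      · intro h
        exact absurd (Finset.mem_range.2 (by omega)) h
    · rw [if_neg (Nat.not_even_iff_odd.mpr hn)]
      apply Finset.sum_eq_zero
      intro k hk
      have : ¬ ((k : ℤ) - ((n - k : ℕ) : ℤ)) = 0 := by
        simp only [Finset.mem_range] at hk
        rcases hn with ⟨m, hm⟩; omega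
      rw [if_neg this, mul_zero]
  · intro k _
    apply Continuous.intervalIntegrable
    fun_prop

lemma ball_integral (a c : ℝ) (n : ℕ) :
    ∫ z in Metric.ball (0:ℂ) 1, (Tmap a c z) ^ n
      = (((n : ℝ) + 2)⁻¹ : ℝ) •
          ∫ θ in (-π : ℝ)..π, (((a * Real.cos θ : ℝ) : ℂ) + ((c * Real.sin θ : ℝ) : ℂ) * Complex.I) ^ n := by
  have hcont : Continuous (fun p : ℝ × ℝ => (Complex.polarCoord.symm p : ℂ)) := by
    have : Continuous fun p : ℝ × ℝ => ((p.1 : ℂ) * (Real.cos p.2 + Real.sin p.2 * Complex.I)) := by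
      fun_prop
    exact this.congr fun p => (Complex.polarCoord_symm_apply p).symm
  have h1 : ∫ z in Metric.ball (0:ℂ) 1, (Tmap a c z) ^ n
      = ∫ z, (Metric.ball (0:ℂ) 1).indicator (fun z => (Tmap a c z) ^ n) z :=
    (integral_indicator measurableSet_ball).symm
  rw [h1, ← Complex.integral_comp_polarCoord_symm]
  have h2 : ∀ p : ℝ × ℝ,
      p.1 • (Metric.ball (0:ℂ) 1).indicator (fun z => (Tmap a c z) ^ n) (Complex.polarCoord.symm p)
        = (Complex.polarCoord.symm ⁻¹' Metric.ball (0:ℂ) 1).indicator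
            (fun p : ℝ × ℝ => p.1 • (Tmap a c (Complex.polarCoord.symm p)) ^ n) p := by
    intro p
    by_cases h : Complex.polarCoord.symm p ∈ Metric.ball (0:ℂ) 1
    · rw [Set.indicator_of_mem h, Set.indicator_of_mem (by exact h)]
    · rw [Set.indicator_of_notMem h, Set.indicator_of_notMem (by exact h), smul_zero]
  simp_rw [h2]
  rw [setIntegral_indicator (hcont.measurable (measurableSet_ball))]
  have h3 : polarCoord.target ∩ Complex.polarCoord.symm ⁻¹' Metric.ball (0:ℂ) 1
      = Ioo (0:ℝ) 1 ×ˢ Ioo (-π) π := by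
    ext p
    simp only [polarCoord_target, Set.mem_inter_iff, Set.mem_prod, Set.mem_Ioi, Set.mem_Ioo,
      Set.mem_preimage, Metric.mem_ball, dist_zero_right,
      Complex.norm_polarCoord_symm]
    constructor
    · rintro ⟨⟨h1, h2⟩, h3⟩
      exact ⟨⟨h1, (abs_lt.mp h3).2⟩, h2⟩
    · rintro ⟨⟨h1, h2⟩, h3⟩
      exact ⟨⟨h1, h3⟩, abs_lt.mpr ⟨by linarith, h2⟩⟩
  rw [h3]
  have h4 : ∀ p : ℝ × ℝ, p.1 • (Tmap a c (Complex.polarCoord.symm p)) ^ n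
      = ((p.1 : ℂ) ^ (n + 1))
        * (((a * Real.cos p.2 : ℝ) : ℂ) + ((c * Real.sin p.2 : ℝ) : ℂ) * Complex.I) ^ n := by
    intro p
    have hre : (Complex.polarCoord.symm p).re = p.1 * Real.cos p.2 := by
      simp [Complex.polarCoord_symm_apply, Complex.cos_ofReal_re, Complex.sin_ofReal_im,
        Complex.cos_ofReal_im, Complex.sin_ofReal_re]
    have him : (Complex.polarCoord.symm p).im = p.1 * Real.sin p.2 := by
      simp [Complex.polarCoord_symm_apply, Complex.cos_ofReal_re, Complex.sin_ofReal_im,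
        Complex.cos_ofReal_im, Complex.sin_ofReal_re]
    rw [Tmap_apply, hre, him]
    have : ((a * (p.1 * Real.cos p.2) : ℝ) : ℂ) + ((c * (p.1 * Real.sin p.2) : ℝ) : ℂ) * Complex.I
        = (p.1 : ℂ) * (((a * Real.cos p.2 : ℝ) : ℂ) + ((c * Real.sin p.2 : ℝ) : ℂ) * Complex.I) := by
      push_cast; ring
    rw [this, mul_pow, Complex.real_smul]
    ring
  simp_rw [h4]
  have h5 : (volume : Measure (ℝ × ℝ)).restrict (Ioo (0:ℝ) 1 ×ˢ Ioo (-π) π)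
      = (volume.restrict (Ioo (0:ℝ) 1)).prod (volume.restrict (Ioo (-π) π)) := by
    rw [Measure.volume_eq_prod, Measure.prod_restrict]
  rw [h5, MeasureTheory.integral_prod_mul (fun r : ℝ => (r : ℂ) ^ (n + 1))
    (fun θ : ℝ => (((a * Real.cos θ : ℝ) : ℂ) + ((c * Real.sin θ : ℝ) : ℂ) * Complex.I) ^ n)]
  have h6 : ∫ r in Ioo (0:ℝ) 1, (r : ℂ) ^ (n + 1) = (((n : ℝ) + 2)⁻¹ : ℝ) := by
    have : ∀ r : ℝ, (r : ℂ) ^ (n + 1) = ((r ^ (n + 1) : ℝ) : ℂ) := by intro r; push_cast; ring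
    simp_rw [this]
    rw [← integral_Ioc_eq_integral_Ioo,
      ← intervalIntegral.integral_of_le (by norm_num : (0:ℝ) ≤ 1),
      intervalIntegral.integral_ofReal, integral_pow]
    push_cast
    norm_num
    ring
  rw [h6, ← integral_Ioc_eq_integral_Ioo,
    ← intervalIntegral.integral_of_le (by linarith [Real.pi_pos] : (-π : ℝ) ≤ π),
    Complex.real_smul]

/-- Let `0 < c ≤ a` and let `U` be the ellipse `{z : (Re z/a)² + (Im z/c)² < 1}`.
For every `n ∈ ℕ`, `∫_U zⁿ d²z/π = 0` if `n` is odd, and if `n` is even it equals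
`2 α^{n/2} γ^{n/2} (α²−γ²)/(n+2) · C(n, n/2)`, where `α = (a+c)/2`, `γ = (a−c)/2`. -/
theorem integral_pow_over_ellipse (a c : ℝ) (hc : 0 < c) (hca : c ≤ a) (n : ℕ) :
    let α : ℝ := (a + c) / 2
    let γ : ℝ := (a - c) / 2
    let U : Set ℂ := {z : ℂ | (z.re / a) ^ 2 + (z.im / c) ^ 2 < 1}
    (Odd n → (∫ z in U, z ^ n) / (Real.pi : ℂ) = 0) ∧
    (Even n →
      (∫ z in U, z ^ n) / (Real.pi : ℂ)
        = ((2 * α ^ (n / 2) * γ ^ (n / 2) * (α ^ 2 - γ ^ 2) / ((n : ℝ) + 2)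
            * (n.choose (n / 2) : ℝ) : ℝ) : ℂ)) := by
  intro α γ U
  have ha : 0 < a := lt_of_lt_of_le hc hca
  have hinj : Set.InjOn (Tmap a c) (Metric.ball (0:ℂ) 1) := by
    intro z _ w _ h
    rw [Tmap_apply, Tmap_apply] at h
    have h1 := congrArg Complex.re h
    have h2 := congrArg Complex.im h
    simp only [Complex.add_re, Complex.ofReal_re, Complex.mul_re, Complex.I_re, Complex.I_im,
      Complex.ofReal_im, Complex.add_im, Complex.mul_im] at h1 h2
    apply Complex.ext
    · have : a * z.re = a * w.re := by linarith
      exact mul_left_cancel₀ (ne_of_gt ha) this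
    · have : c * z.im = c * w.im := by linarith
      exact mul_left_cancel₀ (ne_of_gt hc) this
  have hchg : ∫ z in U, z ^ n = (a * c) • ∫ z in Metric.ball (0:ℂ) 1, (Tmap a c z) ^ n := by
    rw [show U = Tmap a c '' Metric.ball 0 1 from (Tmap_image a c ha hc).symm,
      integral_image_eq_integral_abs_det_fderiv_smul volume measurableSet_ball
        (fun x _ => (Tmap a c).hasFDerivAt.hasFDerivWithinAt) hinj (fun z => z ^ n)]
    simp_rw [Tmap_det, abs_of_pos (mul_pos ha hc)]
    rw [integral_smul]
  have hang : ∀ θ : ℝ, (((a * Real.cos θ : ℝ) : ℂ) + ((c * Real.sin θ : ℝ) : ℂ) * Complex.I)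
      = (α : ℂ) * Complex.exp (θ * Complex.I) + (γ : ℂ) * Complex.exp (-(θ * Complex.I)) := by
    intro θ
    rw [show -((θ:ℂ) * Complex.I) = ((-θ : ℂ)) * Complex.I by ring, Complex.exp_mul_I,
      Complex.exp_mul_I, Complex.cos_neg, Complex.sin_neg]
    simp only [α, γ]
    push_cast
    ring
  rw [hchg, ball_integral]
  simp_rw [hang]
  rw [angular_integral α γ n]
  constructor
  · intro hn
    rw [if_neg (Nat.not_even_iff_odd.mpr hn)]
    simp
  · intro hn
    rw [if_pos hn]
    have hpi : (Real.pi : ℂ) ≠ 0 := Complex.ofReal_ne_zero.mpr Real.pi_ne_zero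
    have hn2 : ((n : ℂ) + 2) ≠ 0 := by
      have h0 : (((n : ℝ) + 2 : ℝ) : ℂ) ≠ 0 := Complex.ofReal_ne_zero.mpr (by positivity)
      push_cast at h0
      exact h0
    have hac : (a : ℂ) * c = (α : ℂ) ^ 2 - (γ : ℂ) ^ 2 := by
      simp only [α, γ]; push_cast; ring
    rw [Complex.real_smul, Complex.real_smul]
    push_cast
    field_simp
    rw [hac]
    ring
end

section
/- Let a > 0, x₀ ≥ 0, b ∈ ℕ_{>0}, and let U = {z ∈ ℂ : |z − x₀| < a}. Then for every n ∈ ℕ, ∫_U z^n · (b²/π)|z|^{2b−2} d²z = ∑_{j=0}^{b−1} C(n,j) x₀^{n−j} f_j, where f_j = 2b² ∑_{k=0, k−j even}^{b−1} C(b−1,k) C(k,(k−j)/2) x₀^k ∑_{m=0}^{b−1−k} C(b−1−k, m) x₀^{2(b−1−k−m)} a^{2+j+k+2m}/(2+j+k+2m). -/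
open MeasureTheory Real Set Finset intervalIntegral

lemma intB (p : ℤ) : ∫ θ in (-π)..π, Complex.exp (p * θ * Complex.I) =
    if p = 0 then 2 * π else 0 := by
  rcases eq_or_ne p 0 with hp | hp
  · simp [hp, Complex.ofReal_neg, two_mul]
  · rw [if_neg hp]
    have hc : (p : ℂ) * Complex.I ≠ 0 := by
      simp [Complex.I_ne_zero, Int.cast_eq_zero, hp]
    have key := integral_exp_mul_complex (c := (p : ℂ) * Complex.I) hc (a := -π) (b := π)
    have h1 : ∀ θ : ℝ, (p : ℂ) * Complex.I * θ = p * θ * Complex.I := by intro θ; ring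
    simp_rw [h1] at key
    rw [key]
    set x := Complex.exp ((p:ℂ) * (π:ℝ) * Complex.I) with hxdef
    have hx : x ^ 2 = 1 := by
      rw [hxdef, ← Complex.exp_nat_mul]
      have : (2:ℕ) * ((p:ℂ) * (π:ℝ) * Complex.I) = p * (2 * π * Complex.I) := by push_cast; ring
      rw [this, Complex.exp_int_mul_two_pi_mul_I]
    have hne : x ≠ 0 := Complex.exp_ne_zero _
    have hinv : Complex.exp ((p:ℂ) * (↑(-π):ℝ) * Complex.I) = x⁻¹ := by
      rw [hxdef, ← Complex.exp_neg]; push_cast; ring_nf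
    rw [hinv]
    have : x = x⁻¹ := by
      field_simp
      linear_combination hx
    rw [← this, sub_self, zero_div]; norm_num

lemma intA (j k : ℕ) : ∫ θ in (-π)..π, Complex.exp (j * θ * Complex.I) * (Real.cos θ : ℂ) ^ k =
    if j ≤ k ∧ Even (k - j) then 2 * π * (k.choose ((k - j) / 2) : ℂ) / 2 ^ k else 0 := by
  have hpt : ∀ θ : ℝ, Complex.exp (j * θ * Complex.I) * (Real.cos θ : ℂ) ^ k =
      ∑ l ∈ range (k + 1), ((k.choose l : ℂ) / 2 ^ k) *
        Complex.exp ((((j : ℤ) + l - (k - l)) : ℤ) * θ * Complex.I) := by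
    intro θ
    set u : ℂ := Complex.exp (θ * Complex.I) with hu
    have hune : u ≠ 0 := Complex.exp_ne_zero _
    have hcos : (Real.cos θ : ℂ) = (u + u⁻¹) / 2 := by
      rw [Complex.ofReal_cos, Complex.cos, hu, ← Complex.exp_neg]
      ring_nf
    have huz : ∀ p : ℤ, u ^ p = Complex.exp ((p : ℂ) * θ * Complex.I) := by
      intro p
      rw [hu, ← Complex.exp_int_mul]
      ring_nf
    have hexp : Complex.exp ((j : ℕ) * (θ : ℂ) * Complex.I) = u ^ ((j : ℕ) : ℤ) := by
      rw [huz]; push_cast; ring_nf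
    rw [hcos, div_pow, add_pow]
    rw [Finset.sum_div, Finset.mul_sum]
    refine Finset.sum_congr rfl fun l hl => ?_
    have h1 : u ^ l = u ^ (l : ℤ) := (zpow_natCast u l).symm
    have h2 : u⁻¹ ^ (k - l) = u ^ (-((k - l : ℕ) : ℤ)) := by
      rw [inv_pow, ← zpow_natCast, ← zpow_neg]
    rw [Finset.mem_range] at hl
    have hc : ((k - l : ℕ) : ℤ) = (k : ℤ) - l := by omega
    rw [hexp, h1, h2, hc, ← huz]
    simp only [zpow_add₀ hune, zpow_sub₀ hune, zpow_neg]
    ring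
  rw [intervalIntegral.integral_congr (fun θ _ => hpt θ)]
  have hint : ∀ l ∈ range (k + 1), IntervalIntegrable (fun θ : ℝ =>
      ((k.choose l : ℂ) / 2 ^ k) *
        Complex.exp ((((j : ℤ) + l - (k - l)) : ℤ) * θ * Complex.I)) volume (-π) π := by
    intro l _
    apply Continuous.intervalIntegrable
    refine continuous_const.mul (Complex.continuous_exp.comp ?_)
    exact (continuous_const.mul Complex.continuous_ofReal).mul continuous_const
  rw [intervalIntegral.integral_finset_sum hint]
  simp_rw [intervalIntegral.integral_const_mul, intB]
  by_cases hcond : j ≤ k ∧ Even (k - j)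
  · rw [if_pos hcond]
    obtain ⟨hjk, t, ht⟩ := hcond
    rw [Finset.sum_eq_single ((k - j) / 2)]
    · rw [if_pos (by omega)]
      push_cast
      ring
    · intro l hl hne
      rw [Finset.mem_range] at hl
      rw [if_neg (by omega)]; simp
    · intro h
      exact absurd (Finset.mem_range.mpr (by omega)) h
  · rw [if_neg hcond]
    apply Finset.sum_eq_zero
    intro l hl
    rw [Finset.mem_range] at hl
    rw [if_neg ?_]; · simp
    intro h
    exact hcond ⟨by omega, ⟨l, by omega⟩⟩

lemma habs_lem (x₀ r θ : ℝ) (b : ℕ) :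
    ((‖(x₀:ℂ) + (r:ℂ) * (Real.cos θ + Real.sin θ * Complex.I)‖ ^ (2*b-2) : ℝ) : ℂ)
      = (((x₀^2 + 2*x₀*r*Real.cos θ + r^2 : ℝ)) : ℂ)^(b-1) := by
  have h2 : 2*b-2 = 2*(b-1) := by omega
  have hns : Complex.normSq ((x₀:ℂ) + (r:ℂ) * (Real.cos θ + Real.sin θ * Complex.I))
      = x₀^2 + 2*x₀*r*Real.cos θ + r^2 := by
    simp [Complex.normSq_apply, Complex.add_re, Complex.add_im, Complex.mul_re, Complex.mul_im, Complex.cos_ofReal_re, Complex.sin_ofReal_re]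
    nlinarith [Real.sin_sq_add_cos_sq θ]
  rw [h2, pow_mul, Complex.sq_norm, hns, Complex.ofReal_pow]

set_option maxHeartbeats 1000000 in
lemma inner_int (x₀ : ℝ) (b n : ℕ) (hb : 0 < b) (c : ℂ) (r : ℝ) :
    (∫ θ in Set.Ioo (-π) π, (r:ℂ) * (((x₀:ℂ) + (r:ℂ) * (Real.cos θ + Real.sin θ * Complex.I))^n
        * c * ((‖(x₀:ℂ) + (r:ℂ) * (Real.cos θ + Real.sin θ * Complex.I)‖ ^ (2*b-2) : ℝ) : ℂ)))
      = ∑ j ∈ Finset.range (n+1), ∑ k ∈ Finset.range b,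
          c * (n.choose j : ℂ) * (x₀:ℂ)^(n-j) * ((b-1).choose k : ℂ) * (2*(x₀:ℂ))^k
            * (if j ≤ k ∧ Even (k-j) then 2*(π:ℂ)*(k.choose ((k-j)/2) : ℂ)/2^k else 0)
            * (r:ℂ)^(1+j+k) * (((x₀^2+r^2 : ℝ)) : ℂ)^(b-1-k) := by
  have hcont : ∀ j k : ℕ, Continuous
      (fun θ : ℝ => Complex.exp (j*θ*Complex.I) * (Real.cos θ:ℂ)^k) := by
    intro j k
    exact (Complex.continuous_exp.comp ((continuous_const.mul
      Complex.continuous_ofReal).mul continuous_const)).mul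
      ((Complex.continuous_ofReal.comp Real.continuous_cos).pow k)
  have hic : ∀ (C : ℂ) (j k : ℕ), IntervalIntegrable
      (fun θ : ℝ => C * (Complex.exp (j*θ*Complex.I) * (Real.cos θ:ℂ)^k)) volume (-π) π := by
    intro C j k
    exact (continuous_const.mul (hcont j k)).intervalIntegrable _ _
  set A : ℕ → ℕ → ℂ := fun j k =>
    c * (n.choose j : ℂ) * (x₀:ℂ)^(n-j) * ((b-1).choose k : ℂ) * (2*(x₀:ℂ))^k
      * (r:ℂ)^(1+j+k) * (((x₀^2+r^2 : ℝ)) : ℂ)^(b-1-k) with hA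
  have key : ∀ θ : ℝ, (r:ℂ) * (((x₀:ℂ) + (r:ℂ) * (Real.cos θ + Real.sin θ * Complex.I))^n
        * c * ((‖(x₀:ℂ) + (r:ℂ) * (Real.cos θ + Real.sin θ * Complex.I)‖ ^ (2*b-2) : ℝ) : ℂ))
      = ∑ j ∈ Finset.range (n+1), ∑ k ∈ Finset.range b,
          A j k * (Complex.exp (j * θ * Complex.I) * (Real.cos θ : ℂ) ^ k) := by
    intro θ
    have he : (Real.cos θ : ℂ) + (Real.sin θ : ℂ) * Complex.I = Complex.exp (θ * Complex.I) := by
      rw [Complex.exp_mul_I, Complex.ofReal_cos, Complex.ofReal_sin]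
    have e1 : ((x₀:ℂ) + (r:ℂ) * (Real.cos θ + Real.sin θ * Complex.I))^n
        = ∑ j ∈ Finset.range (n+1),
            (r:ℂ)^j * Complex.exp (j * θ * Complex.I) * (x₀:ℂ)^(n-j) * (n.choose j : ℂ) := by
      rw [add_comm, add_pow]
      refine Finset.sum_congr rfl fun j hj => ?_
      rw [he, mul_pow, ← Complex.exp_nat_mul]
      push_cast
      ring
    have e2 : (((x₀^2 + 2*x₀*r*Real.cos θ + r^2 : ℝ)) : ℂ)^(b-1)
        = ∑ k ∈ Finset.range b,
            (2*(x₀:ℂ))^k * (r:ℂ)^k * (Real.cos θ : ℂ)^k * (((x₀^2+r^2 : ℝ)) : ℂ)^(b-1-k)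
              * ((b-1).choose k : ℂ) := by
      have hsplit : (((x₀^2 + 2*x₀*r*Real.cos θ + r^2 : ℝ)) : ℂ)
          = (2*(x₀:ℂ)) * (r:ℂ) * (Real.cos θ : ℂ) + (((x₀^2+r^2 : ℝ)) : ℂ) := by
        push_cast; ring
      rw [hsplit, add_pow, show b - 1 + 1 = b from by omega]
      refine Finset.sum_congr rfl fun k hk => ?_
      rw [mul_pow, mul_pow]
      try ring
    rw [habs_lem, e1, e2, Finset.sum_mul, Finset.sum_mul_sum, Finset.mul_sum]
    refine Finset.sum_congr rfl fun j hj => ?_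
    rw [Finset.mul_sum]
    refine Finset.sum_congr rfl fun k hk => ?_
    rw [hA]
    push_cast
    try ring
  rw [← integral_Ioc_eq_integral_Ioo,
    ← intervalIntegral.integral_of_le (by linarith [pi_pos] : -π ≤ π),
    intervalIntegral.integral_congr (fun θ _ => key θ)]
  have h1 := intervalIntegral.integral_finset_sum (μ := volume) (a := -π) (b := π)
    (s := Finset.range (n+1))
    (f := fun j (θ:ℝ) => ∑ k ∈ Finset.range b,
      A j k * (Complex.exp (j*θ*Complex.I) * (Real.cos θ:ℂ)^k))
    (fun j _ => (Continuous.intervalIntegrable (continuous_finset_sum _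
      (fun k _ => continuous_const.mul (hcont j k))) _ _))
  rw [h1]
  refine Finset.sum_congr rfl fun j hj => ?_
  have h2 := intervalIntegral.integral_finset_sum (μ := volume) (a := -π) (b := π)
    (s := Finset.range b)
    (f := fun k (θ:ℝ) => A j k * (Complex.exp (j*θ*Complex.I) * (Real.cos θ:ℂ)^k))
    (fun k _ => hic (A j k) j k)
  rw [h2]
  refine Finset.sum_congr rfl fun k hk => ?_
  rw [intervalIntegral.integral_const_mul, intA, hA]
  ring

lemma reduction (a x₀ : ℝ) (b n : ℕ) (F : ℂ → ℂ) (hFcont : Continuous F) :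
    (∫ z in {z : ℂ | ‖z - (x₀ : ℂ)‖ < a}, F z)
      = ∫ r in Set.Ioo (0:ℝ) a, ∫ θ in Set.Ioo (-π) π,
          (r : ℂ) * F ((x₀:ℂ) + (r:ℂ) * (Real.cos θ + Real.sin θ * Complex.I)) := by
  have hUball : {z : ℂ | ‖z - (x₀:ℂ)‖ < a} = Metric.ball (x₀:ℂ) a := by
    ext z; simp [Complex.dist_eq, Metric.mem_ball]
  rw [hUball]
  set G : ℝ × ℝ → ℂ := fun p =>
    (p.1 : ℂ) * F ((x₀:ℂ) + (p.1:ℂ) * (Real.cos p.2 + Real.sin p.2 * Complex.I)) with hG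
  have hGcont : Continuous G := by
    apply Continuous.mul (Complex.continuous_ofReal.comp continuous_fst)
    apply hFcont.comp
    apply continuous_const.add
    apply Continuous.mul (Complex.continuous_ofReal.comp continuous_fst)
    exact ((Complex.continuous_ofReal.comp (Real.continuous_cos.comp continuous_snd)).add
      ((Complex.continuous_ofReal.comp (Real.continuous_sin.comp continuous_snd)).mul
        continuous_const))
  have step1 : (∫ z in Metric.ball (x₀:ℂ) a, F z) = ∫ w in Metric.ball (0:ℂ) a, F ((x₀:ℂ) + w) := by
    rw [← MeasureTheory.integral_indicator measurableSet_ball,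
      ← MeasureTheory.integral_indicator measurableSet_ball,
      ← integral_add_left_eq_self (μ := volume) (Set.indicator (Metric.ball (x₀:ℂ) a) F) (x₀:ℂ)]
    congr 1
    ext w
    have hmem : ((x₀:ℂ) + w ∈ Metric.ball (x₀:ℂ) a) ↔ w ∈ Metric.ball (0:ℂ) a := by
      simp [Metric.mem_ball, Complex.dist_eq]
    classical
    rw [Set.indicator_apply, Set.indicator_apply]
    exact if_congr hmem rfl rfl
  have hS : (Set.Ioo (0:ℝ) a ×ˢ Set.Ioo (-π) π) ⊆ polarCoord.target := by
    rw [polarCoord_target]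
    exact Set.prod_mono (fun x hx => hx.1) subset_rfl
  have step2 : (∫ w in Metric.ball (0:ℂ) a, F ((x₀:ℂ) + w))
      = ∫ p in Set.Ioo (0:ℝ) a ×ˢ Set.Ioo (-π) π, G p := by
    rw [← MeasureTheory.integral_indicator measurableSet_ball,
      ← Complex.integral_comp_polarCoord_symm
        (fun w => Set.indicator (Metric.ball (0:ℂ) a) (fun w => F ((x₀:ℂ) + w)) w)]
    have hcong : ∀ p ∈ polarCoord.target,
        p.1 • (Set.indicator (Metric.ball (0:ℂ) a) (fun w => F ((x₀:ℂ) + w))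
          (Complex.polarCoord.symm p))
        = Set.indicator (Set.Ioo (0:ℝ) a ×ˢ Set.Ioo (-π) π) G p := by
      intro p hp
      rw [polarCoord_target] at hp
      obtain ⟨hp1, hp2⟩ := hp
      have habs : ‖Complex.polarCoord.symm p‖ = p.1 := by
        rw [Complex.norm_polarCoord_symm, abs_of_pos hp1]
      have hmem : Complex.polarCoord.symm p ∈ Metric.ball (0:ℂ) a ↔ p.1 < a := by
        rw [Metric.mem_ball, Complex.dist_eq, sub_zero, habs]
      by_cases hpa : p.1 < a
      · rw [Set.indicator_of_mem (hmem.mpr hpa),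
          Set.indicator_of_mem (Set.mk_mem_prod (Set.mem_Ioo.mpr ⟨hp1, hpa⟩) hp2)]
        rw [Complex.polarCoord_symm_apply]
        simp [hG, Complex.real_smul]
      · rw [Set.indicator_of_notMem (fun h => hpa (hmem.mp h)),
          Set.indicator_of_notMem (fun h => hpa h.1.2), smul_zero]
    rw [setIntegral_congr_fun polarCoord.open_target.measurableSet hcong,
      setIntegral_indicator (measurableSet_Ioo.prod measurableSet_Ioo),
      Set.inter_eq_right.mpr hS]
  rw [step1, step2]
  have hInt : IntegrableOn G (Set.Ioo (0:ℝ) a ×ˢ Set.Ioo (-π) π) volume := by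
    apply IntegrableOn.mono_set (t := Set.Icc (0:ℝ) a ×ˢ Set.Icc (-π) π)
    · exact hGcont.continuousOn.integrableOn_compact (isCompact_Icc.prod isCompact_Icc)
    · exact Set.prod_mono Set.Ioo_subset_Icc_self Set.Ioo_subset_Icc_self
  rw [MeasureTheory.Measure.volume_eq_prod ℝ ℝ] at hInt ⊢
  rw [setIntegral_prod _ hInt]


lemma rad (a : ℝ) (e : ℕ) : (∫ r in (0:ℝ)..a, ((r:ℂ))^e)
    = ((a^(e+1) / (((e+1:ℕ)) : ℝ) : ℝ) : ℂ) := by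
  have h : (fun r : ℝ => ((r:ℂ))^e) = fun r : ℝ => ((r^e : ℝ) : ℂ) := by
    ext r; push_cast; ring
  rw [h, intervalIntegral.integral_ofReal, integral_pow]
  norm_num

set_option maxHeartbeats 1000000 in
lemma outer_int (a x₀ : ℝ) (ha : 0 < a) (b n : ℕ) (hb : 0 < b) (c : ℂ) :
    (∫ r in Set.Ioo (0:ℝ) a, ∑ j ∈ Finset.range (n+1), ∑ k ∈ Finset.range b,
        c * (n.choose j : ℂ) * (x₀:ℂ)^(n-j) * ((b-1).choose k : ℂ) * (2*(x₀:ℂ))^k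
          * (if j ≤ k ∧ Even (k-j) then 2*(π:ℂ)*(k.choose ((k-j)/2) : ℂ)/2^k else 0)
          * (r:ℂ)^(1+j+k) * (((x₀^2+r^2 : ℝ)) : ℂ)^(b-1-k))
      = ∑ j ∈ Finset.range (n+1), ∑ k ∈ Finset.range b, ∑ m ∈ Finset.range (b-k),
          c * (n.choose j : ℂ) * (x₀:ℂ)^(n-j) * ((b-1).choose k : ℂ) * (2*(x₀:ℂ))^k
            * (if j ≤ k ∧ Even (k-j) then 2*(π:ℂ)*(k.choose ((k-j)/2) : ℂ)/2^k else 0)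
            * ((b-1-k).choose m : ℂ) * ((x₀:ℂ)^2)^(b-1-k-m)
            * ((a^(2+j+k+2*m) / (((2+j+k+2*m : ℕ)) : ℝ) : ℝ) : ℂ) := by
  set D : ℕ → ℕ → ℂ := fun j k =>
    c * (n.choose j : ℂ) * (x₀:ℂ)^(n-j) * ((b-1).choose k : ℂ) * (2*(x₀:ℂ))^k
      * (if j ≤ k ∧ Even (k-j) then 2*(π:ℂ)*(k.choose ((k-j)/2) : ℂ)/2^k else 0) with hD
  have key2 : ∀ r : ℝ, (∑ j ∈ Finset.range (n+1), ∑ k ∈ Finset.range b,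
      D j k * (r:ℂ)^(1+j+k) * (((x₀^2+r^2 : ℝ)) : ℂ)^(b-1-k))
      = ∑ j ∈ Finset.range (n+1), ∑ k ∈ Finset.range b, ∑ m ∈ Finset.range (b-k),
          D j k * ((b-1-k).choose m : ℂ) * ((x₀:ℂ)^2)^(b-1-k-m) * ((r:ℂ))^(1+j+k+2*m) := by
    intro r
    refine Finset.sum_congr rfl fun j hj => Finset.sum_congr rfl fun k hk => ?_
    rw [Finset.mem_range] at hk
    have e3 : (((x₀^2+r^2 : ℝ)) : ℂ)^(b-1-k)
        = ∑ m ∈ Finset.range (b-k), ((r:ℂ)^2)^m * ((x₀:ℂ)^2)^(b-1-k-m)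
            * ((b-1-k).choose m : ℂ) := by
      have hsplit : (((x₀^2+r^2 : ℝ)) : ℂ) = (r:ℂ)^2 + (x₀:ℂ)^2 := by push_cast; ring
      rw [hsplit, add_pow, show b-1-k+1 = b-k from by omega]
    rw [e3, Finset.mul_sum]
    refine Finset.sum_congr rfl fun m hm => ?_
    ring
  rw [← integral_Ioc_eq_integral_Ioo, ← intervalIntegral.integral_of_le ha.le,
    intervalIntegral.integral_congr (fun r _ => key2 r)]
  have h1 := intervalIntegral.integral_finset_sum (μ := volume) (a := (0:ℝ)) (b := a)
    (s := Finset.range (n+1))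
    (f := fun j (r:ℝ) => ∑ k ∈ Finset.range b, ∑ m ∈ Finset.range (b-k),
      D j k * ((b-1-k).choose m : ℂ) * ((x₀:ℂ)^2)^(b-1-k-m) * ((r:ℂ))^(1+j+k+2*m))
    (fun j _ => (Continuous.intervalIntegrable (by fun_prop) _ _))
  rw [h1]
  refine Finset.sum_congr rfl fun j hj => ?_
  have h2 := intervalIntegral.integral_finset_sum (μ := volume) (a := (0:ℝ)) (b := a)
    (s := Finset.range b)
    (f := fun k (r:ℝ) => ∑ m ∈ Finset.range (b-k),
      D j k * ((b-1-k).choose m : ℂ) * ((x₀:ℂ)^2)^(b-1-k-m) * ((r:ℂ))^(1+j+k+2*m))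
    (fun k _ => (Continuous.intervalIntegrable (by fun_prop) _ _))
  rw [h2]
  refine Finset.sum_congr rfl fun k hk => ?_
  have h3 := intervalIntegral.integral_finset_sum (μ := volume) (a := (0:ℝ)) (b := a)
    (s := Finset.range (b-k))
    (f := fun m (r:ℝ) =>
      D j k * ((b-1-k).choose m : ℂ) * ((x₀:ℂ)^2)^(b-1-k-m) * ((r:ℂ))^(1+j+k+2*m))
    (fun m _ => (Continuous.intervalIntegrable
        (continuous_const.mul ((Complex.continuous_ofReal).pow _)) _ _))
  rw [h3]
  refine Finset.sum_congr rfl fun m hm => ?_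
  rw [intervalIntegral.integral_const_mul, rad, show 1+j+k+2*m+1 = 2+j+k+2*m from by omega]

set_option maxHeartbeats 1000000 in
lemma combine_s12 (a x₀ : ℝ) (b n : ℕ) (hb : 0 < b) :
    (∑ j ∈ Finset.range (n+1), ∑ k ∈ Finset.range b, ∑ m ∈ Finset.range (b-k),
          ((b:ℂ)^2 / ((π:ℝ):ℂ)) * (n.choose j : ℂ) * (x₀:ℂ)^(n-j) * ((b-1).choose k : ℂ) * (2*(x₀:ℂ))^k
            * (if j ≤ k ∧ Even (k-j) then 2*(π:ℂ)*(k.choose ((k-j)/2) : ℂ)/2^k else 0)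
            * ((b-1-k).choose m : ℂ) * ((x₀:ℂ)^2)^(b-1-k-m)
            * ((a^(2+j+k+2*m) / (((2+j+k+2*m : ℕ)) : ℝ) : ℝ) : ℂ))
      = ∑ j ∈ Finset.range b, (n.choose j : ℂ) * (x₀ : ℂ) ^ (n - j) *
          (((2 * (b : ℝ) ^ 2 * ∑ k ∈ Finset.range b,
        (if j ≤ k ∧ Even (k - j) then
          ((b - 1).choose k : ℝ) * (k.choose ((k - j) / 2) : ℝ) * x₀ ^ k *
            ∑ m ∈ Finset.range (b - k), ((b - 1 - k).choose m : ℝ) *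
              x₀ ^ (2 * (b - 1 - k - m)) * a ^ (2 + j + k + 2 * m)
                / ((2 + j + k + 2 * m : ℕ) : ℝ)
        else 0)) : ℝ) : ℂ) := by
  have hπ : ((π:ℝ):ℂ) ≠ 0 := Complex.ofReal_ne_zero.mpr Real.pi_ne_zero
  set N := max b (n+1) with hN
  -- common per-j expressions
  set L : ℕ → ℂ := fun j => ∑ k ∈ Finset.range b, ∑ m ∈ Finset.range (b-k),
          ((b:ℂ)^2 / ((π:ℝ):ℂ)) * (n.choose j : ℂ) * (x₀:ℂ)^(n-j) * ((b-1).choose k : ℂ) * (2*(x₀:ℂ))^k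
            * (if j ≤ k ∧ Even (k-j) then 2*(π:ℂ)*(k.choose ((k-j)/2) : ℂ)/2^k else 0)
            * ((b-1-k).choose m : ℂ) * ((x₀:ℂ)^2)^(b-1-k-m)
            * ((a^(2+j+k+2*m) / (((2+j+k+2*m : ℕ)) : ℝ) : ℝ) : ℂ) with hL
  set R : ℕ → ℂ := fun j => (n.choose j : ℂ) * (x₀ : ℂ) ^ (n - j) *
          (((2 * (b : ℝ) ^ 2 * ∑ k ∈ Finset.range b,
        (if j ≤ k ∧ Even (k - j) then
          ((b - 1).choose k : ℝ) * (k.choose ((k - j) / 2) : ℝ) * x₀ ^ k *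
            ∑ m ∈ Finset.range (b - k), ((b - 1 - k).choose m : ℝ) *
              x₀ ^ (2 * (b - 1 - k - m)) * a ^ (2 + j + k + 2 * m)
                / ((2 + j + k + 2 * m : ℕ) : ℝ)
        else 0)) : ℝ) : ℂ) with hR
  have hLN : (∑ j ∈ Finset.range (n+1), L j) = ∑ j ∈ Finset.range N, L j := by
    apply Finset.sum_subset (Finset.range_subset_range.mpr (le_max_right b (n+1)))
    intro j _ hj
    rw [Finset.mem_range, not_lt] at hj
    rw [hL]
    refine Finset.sum_eq_zero fun k _ => Finset.sum_eq_zero fun m _ => ?_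
    rw [Nat.choose_eq_zero_of_lt (by omega)]
    simp
  have hRN : (∑ j ∈ Finset.range b, R j) = ∑ j ∈ Finset.range N, R j := by
    apply Finset.sum_subset (Finset.range_subset_range.mpr (le_max_left b (n+1)))
    intro j _ hj
    rw [Finset.mem_range, not_lt] at hj
    simp only [hR]
    have : ∀ k ∈ Finset.range b, (if j ≤ k ∧ Even (k - j) then
          ((b - 1).choose k : ℝ) * (k.choose ((k - j) / 2) : ℝ) * x₀ ^ k *
            ∑ m ∈ Finset.range (b - k), ((b - 1 - k).choose m : ℝ) *
              x₀ ^ (2 * (b - 1 - k - m)) * a ^ (2 + j + k + 2 * m)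
                / ((2 + j + k + 2 * m : ℕ) : ℝ)
        else 0) = 0 := by
      intro k hk
      rw [Finset.mem_range] at hk
      rw [if_neg (by omega)]
    rw [Finset.sum_congr rfl this]
    simp
  rw [show (∑ j ∈ Finset.range (n+1), ∑ k ∈ Finset.range b, ∑ m ∈ Finset.range (b-k),
          ((b:ℂ)^2 / ((π:ℝ):ℂ)) * (n.choose j : ℂ) * (x₀:ℂ)^(n-j) * ((b-1).choose k : ℂ) * (2*(x₀:ℂ))^k
            * (if j ≤ k ∧ Even (k-j) then 2*(π:ℂ)*(k.choose ((k-j)/2) : ℂ)/2^k else 0)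
            * ((b-1-k).choose m : ℂ) * ((x₀:ℂ)^2)^(b-1-k-m)
            * ((a^(2+j+k+2*m) / (((2+j+k+2*m : ℕ)) : ℝ) : ℝ) : ℂ)) = ∑ j ∈ Finset.range (n+1), L j from rfl,
    hLN, hRN]
  refine Finset.sum_congr rfl fun j _ => ?_
  simp only [hL, hR]
  push_cast [apply_ite Complex.ofReal]
  simp only [Finset.mul_sum]
  refine Finset.sum_congr rfl fun k hk => ?_
  by_cases hcond : j ≤ k ∧ Even (k - j)
  · rw [if_pos hcond, if_pos hcond]
    simp only [Finset.mul_sum]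
    refine Finset.sum_congr rfl fun m hm => ?_
    have he : (((2:ℂ))+j+k+2*m) ≠ 0 := by
      have : (((2+j+k+2*m : ℕ)) : ℂ) ≠ 0 := Nat.cast_ne_zero.mpr (by omega)
      push_cast at this
      convert this using 2 <;> push_cast <;> ring
    have h2k : ((2:ℂ))^k ≠ 0 := pow_ne_zero _ two_ne_zero
    rw [show 2*(b-1-k-m) = (b-1-k-m)*2 from by ring, pow_mul]
    field_simp
    ring
  · rw [if_neg hcond, if_neg hcond]
    simp




/-- Let `a > 0`, `x₀ ≥ 0`, `b ∈ ℕ_{>0}`, and `U = {z : |z − x₀| < a}`. Then for every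
`n ∈ ℕ`, `∫_U zⁿ (b²/π)|z|^{2b−2} d²z = ∑_{j=0}^{b−1} C(n,j) x₀^{n−j} f_j`, where
`f_j = 2b² ∑_{k : k−j even} C(b−1,k) C(k,(k−j)/2) x₀^k
  ∑_{m=0}^{b−1−k} C(b−1−k,m) x₀^{2(b−1−k−m)} a^{2+j+k+2m}/(2+j+k+2m)`
(the binomial `C(k,(k−j)/2)` vanishes when `k < j`). -/
theorem moments_of_mu_on_disk (a x₀ : ℝ) (ha : 0 < a) (hx₀ : 0 ≤ x₀)
    (b : ℕ) (hb : 0 < b) (n : ℕ) :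
    let f : ℕ → ℝ := fun j =>
      2 * (b : ℝ) ^ 2 * ∑ k ∈ Finset.range b,
        (if j ≤ k ∧ Even (k - j) then
          ((b - 1).choose k : ℝ) * (k.choose ((k - j) / 2) : ℝ) * x₀ ^ k *
            ∑ m ∈ Finset.range (b - k), ((b - 1 - k).choose m : ℝ) *
              x₀ ^ (2 * (b - 1 - k - m)) * a ^ (2 + j + k + 2 * m)
                / ((2 + j + k + 2 * m : ℕ) : ℝ)
        else 0)
    (∫ z in {z : ℂ | ‖z - (x₀ : ℂ)‖ < a},
        z ^ n * ((b : ℂ) ^ 2 / (Real.pi : ℂ)) * ((‖z‖ ^ (2 * b - 2) : ℝ) : ℂ))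
      = ∑ j ∈ Finset.range b, (n.choose j : ℂ) * (x₀ : ℂ) ^ (n - j) * ((f j : ℝ) : ℂ) := by
  intro f
  set c : ℂ := (b:ℂ)^2 / ((π:ℝ):ℂ) with hc
  set F : ℂ → ℂ := fun z => z ^ n * c * ((‖z‖ ^ (2*b-2) : ℝ) : ℂ) with hF
  have hFcont : Continuous F := by
    apply Continuous.mul (Continuous.mul (continuous_pow n) continuous_const)
    exact Complex.continuous_ofReal.comp ((continuous_norm).pow _)
  calc (∫ z in {z : ℂ | ‖z - (x₀ : ℂ)‖ < a}, F z)
      = ∫ r in Set.Ioo (0:ℝ) a, ∫ θ in Set.Ioo (-π) π,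
          (r : ℂ) * F ((x₀:ℂ) + (r:ℂ) * (Real.cos θ + Real.sin θ * Complex.I)) :=
        reduction a x₀ b n F hFcont
    _ = ∫ r in Set.Ioo (0:ℝ) a, ∑ j ∈ Finset.range (n+1), ∑ k ∈ Finset.range b,
          c * (n.choose j : ℂ) * (x₀:ℂ)^(n-j) * ((b-1).choose k : ℂ) * (2*(x₀:ℂ))^k
            * (if j ≤ k ∧ Even (k-j) then 2*(π:ℂ)*(k.choose ((k-j)/2) : ℂ)/2^k else 0)
            * (r:ℂ)^(1+j+k) * (((x₀^2+r^2 : ℝ)) : ℂ)^(b-1-k) := by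
        refine setIntegral_congr_fun measurableSet_Ioo fun r _ => ?_
        exact inner_int x₀ b n hb c r
    _ = ∑ j ∈ Finset.range (n+1), ∑ k ∈ Finset.range b, ∑ m ∈ Finset.range (b-k),
          c * (n.choose j : ℂ) * (x₀:ℂ)^(n-j) * ((b-1).choose k : ℂ) * (2*(x₀:ℂ))^k
            * (if j ≤ k ∧ Even (k-j) then 2*(π:ℂ)*(k.choose ((k-j)/2) : ℂ)/2^k else 0)
            * ((b-1-k).choose m : ℂ) * ((x₀:ℂ)^2)^(b-1-k-m)
            * ((a^(2+j+k+2*m) / (((2+j+k+2*m : ℕ)) : ℝ) : ℝ) : ℂ) :=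
        outer_int a x₀ ha b n hb c
    _ = ∑ j ∈ Finset.range b, (n.choose j : ℂ) * (x₀ : ℂ) ^ (n - j) * ((f j : ℝ) : ℂ) :=
        combine_s12 a x₀ b n hb
end

section
/- Let a > c > 0 and let ν be the measure on the ellipse ∂U = {a cosθ + i c sinθ : θ ∈ (−π,π]} given by dν = (c₀ + 2c₁ cos(2θ)) dθ for real constants c₀, c₁. Then for n ∈ ℕ, ∫_{∂U} z^{−n} dν(z) equals 2π c₀ if n = 0, equals 8π c₁/(a+c)² if n = 2, and equals 0 otherwise. -/
open Complex MeasureTheory intervalIntegral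

lemma fourier_int (j : ℤ) :
    (∫ θ in (-Real.pi)..Real.pi, Complex.exp ((j : ℂ) * Complex.I * θ))
      = if j = 0 then (2 * Real.pi : ℂ) else 0 := by
  rcases eq_or_ne j 0 with h | h
  · subst h
    simp only [Int.cast_zero, zero_mul, Complex.exp_zero, if_true]
    rw [intervalIntegral.integral_const]
    push_cast [Complex.real_smul]
    ring
  · rw [if_neg h]
    have hc : (j : ℂ) * Complex.I ≠ 0 := by
      simp [Complex.ext_iff, h]
    rw [integral_exp_mul_complex hc]
    have h1 : (j:ℂ) * Complex.I * (Real.pi:ℂ)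
        = (j:ℂ) * Complex.I * ((-Real.pi : ℝ):ℂ) + (j:ℂ) * (2 * Real.pi * Complex.I) := by
      push_cast; ring
    rw [h1, Complex.exp_add, Complex.exp_int_mul_two_pi_mul_I, mul_one, sub_self, zero_div]

lemma ellipse_z (a c : ℝ) (θ : ℝ) :
    (a : ℂ) * (Real.cos θ : ℂ) + Complex.I * c * (Real.sin θ : ℂ)
      = (((a+c)/2 : ℝ) : ℂ) * Complex.exp (Complex.I * θ)
        + (((a-c)/2 : ℝ) : ℂ) * Complex.exp (-(Complex.I * θ)) := by
  have e1 : Complex.exp (Complex.I * (θ:ℂ)) = Complex.cos θ + Complex.sin θ * Complex.I := by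
    rw [mul_comm, Complex.exp_mul_I]
  have e2 : Complex.exp (-(Complex.I * (θ:ℂ))) = Complex.cos θ - Complex.sin θ * Complex.I := by
    rw [show -(Complex.I * (θ:ℂ)) = ((-θ : ℝ) : ℂ) * Complex.I by push_cast; ring,
      Complex.exp_mul_I, Complex.ofReal_neg, Complex.cos_neg, Complex.sin_neg]
    ring
  rw [e1, e2, Complex.ofReal_cos, Complex.ofReal_sin]
  push_cast
  ring

lemma ellipse_z_ne_zero (a c : ℝ) (hc : 0 < c) (hca : c < a) (θ : ℝ) :
    (a : ℂ) * (Real.cos θ : ℂ) + Complex.I * c * (Real.sin θ : ℂ) ≠ 0 := by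
  intro h
  rw [Complex.ext_iff] at h
  simp at h
  obtain ⟨h1, h2⟩ := h
  have ha : a ≠ 0 := by linarith
  have hc' : c ≠ 0 := by linarith
  have hcos : Real.cos θ = 0 := by
    rcases h1 with h | h
    · exact absurd h ha
    · rwa [Complex.cos_ofReal_re] at h
  have hsin : Real.sin θ = 0 := by
    rcases h2 with h | h
    · exact absurd h hc'
    · rwa [Complex.sin_ofReal_re] at h
  nlinarith [Real.sin_sq_add_cos_sq θ]

lemma integral_hasSum_fourier (C : ℕ → ℂ) (hC : Summable C) (u : ℕ → ℤ) (g : ℝ → ℂ)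
    (hg : ∀ θ : ℝ, HasSum (fun j => C j * Complex.exp (((u j : ℂ)) * Complex.I * θ)) (g θ)) :
    (∫ θ in (-Real.pi)..Real.pi, g θ)
      = ∑' j : ℕ, C j * (if u j = 0 then (2*Real.pi:ℂ) else 0) := by
  have hle : (-Real.pi) ≤ Real.pi := by linarith [Real.pi_pos]
  have hcont : ∀ j : ℕ, Continuous fun θ : ℝ => C j * Complex.exp (((u j : ℂ)) * Complex.I * θ) := by
    intro j
    exact continuous_const.mul (Complex.continuous_exp.comp (continuous_const.mul
      Complex.continuous_ofReal))
  have hnorm : ∀ (j : ℕ) (θ : ℝ), ‖C j * Complex.exp (((u j : ℂ)) * Complex.I * θ)‖₊ = ‖C j‖₊ := by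
    intro j θ
    have h1 : ((u j : ℂ)) * Complex.I * θ = (((u j : ℝ) * θ : ℝ) : ℂ) * Complex.I := by
      push_cast; ring
    have h2 : ‖Complex.exp (((u j : ℂ)) * Complex.I * θ)‖ = 1 := by
      rw [h1, Complex.norm_exp_ofReal_mul_I]
    ext
    simp [nnnorm_mul, NNReal.coe_mul, ← norm_toNNReal, h2]
  have hlint : ∀ j : ℕ, (∫⁻ θ in Set.Ioc (-Real.pi) Real.pi,
      ‖C j * Complex.exp (((u j : ℂ)) * Complex.I * θ)‖₊)
        = (‖C j‖₊ : ENNReal) * ENNReal.ofReal (Real.pi - -Real.pi) := by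
    intro j
    simp only [hnorm]
    rw [MeasureTheory.lintegral_const, Measure.restrict_apply_univ, Real.volume_Ioc]
  have hCnn : Summable (fun j => ‖C j‖₊) := by
    rw [← NNReal.summable_coe]
    simpa [coe_nnnorm] using (summable_norm_iff.2 hC)
  rw [intervalIntegral.integral_of_le hle,
    MeasureTheory.integral_congr_ae (Filter.Eventually.of_forall fun θ => ((hg θ).tsum_eq).symm),
    MeasureTheory.integral_tsum (fun j => ((hcont j).aestronglyMeasurable))
      (by
        simp only [enorm_eq_nnnorm, hlint]
        rw [ENNReal.tsum_mul_right]
        exact ENNReal.mul_ne_top (ENNReal.tsum_coe_ne_top_iff_summable.2 hCnn)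
          ENNReal.ofReal_ne_top)]
  refine tsum_congr fun j => ?_
  rw [MeasureTheory.integral_const_mul, ← intervalIntegral.integral_of_le hle, fourier_int (u j)]

lemma aux_int (a c : ℝ) (hc : 0 < c) (hca : c < a) (n : ℕ) (hn : n ≠ 0) (m : ℤ) :
    (∫ θ in (-Real.pi)..Real.pi,
        ((a:ℂ) * (Real.cos θ:ℂ) + Complex.I * c * (Real.sin θ:ℂ)) ^ (-(n:ℤ))
          * Complex.exp ((m:ℂ) * Complex.I * θ))
      = ∑' j : ℕ, ((((((a+c)/2 : ℝ):ℂ))⁻¹^n * (-((((a-c)/2)/((a+c)/2) : ℝ):ℂ))^j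
            * ((j + (n-1)).choose (n-1) : ℂ))
          * (if (m : ℤ) - n - 2*j = 0 then (2*Real.pi:ℂ) else 0)) := by
  set A : ℂ := (((a+c)/2 : ℝ) : ℂ) with hA_def
  set r : ℂ := ((((a-c)/2)/((a+c)/2) : ℝ) : ℂ) with hr_def
  have hac : (0:ℝ) < (a+c)/2 := by linarith
  have hbpos : (0:ℝ) < (a-c)/2 := by linarith
  have hA : A ≠ 0 := by
    simp only [hA_def, ne_eq, Complex.ofReal_eq_zero]
    linarith
  have hAr : A * r = (((a-c)/2 : ℝ) : ℂ) := by
    rw [hA_def, hr_def, ← Complex.ofReal_mul, mul_comm]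
    exact congrArg _ (div_mul_cancel₀ _ (ne_of_gt hac))
  have hrnorm : ‖r‖ < 1 := by
    rw [hr_def, Complex.norm_real, Real.norm_eq_abs, abs_div, abs_of_pos hbpos,
      abs_of_pos hac, div_lt_one hac]
    linarith
  have hrnorm' : ‖-r‖ < 1 := by rwa [norm_neg]
  have hn1 : n - 1 + 1 = n := Nat.succ_pred_eq_of_pos (Nat.pos_of_ne_zero hn)
  have hC : Summable (fun j : ℕ => A⁻¹^n * (-r)^j * ((j + (n-1)).choose (n-1) : ℂ)) := by
    have := (hasSum_choose_mul_geometric_of_norm_lt_one (n-1) hrnorm').summable.mul_left (A⁻¹^n)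
    exact this.congr fun j => by ring
  refine integral_hasSum_fourier _ hC (fun j => m - n - 2*j) _ (fun θ => ?_)
  set x : ℂ := -r * Complex.exp (-(2 * Complex.I * θ)) with hx_def
  have hxnorm : ‖x‖ < 1 := by
    have h1 : -(2 * Complex.I * (θ:ℂ)) = (((-2*θ : ℝ)) : ℂ) * Complex.I := by
      push_cast; ring
    rw [hx_def, norm_mul, norm_neg, h1]
    have : ‖Complex.exp ((((-2*θ : ℝ)) : ℂ) * Complex.I)‖ = 1 := by
      rw [Complex.norm_exp_ofReal_mul_I]
    rw [this, mul_one]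
    exact hrnorm
  have hS := (hasSum_choose_mul_geometric_of_norm_lt_one (n-1) hxnorm).mul_left
    (A⁻¹^n * Complex.exp (((m:ℂ) - n) * Complex.I * θ))
  rw [hn1] at hS
  have hfe : (fun j : ℕ => A⁻¹^n * Complex.exp (((m:ℂ) - n) * Complex.I * θ)
        * (((j + (n-1)).choose (n-1) : ℂ) * x ^ j))
      = fun j : ℕ => (A⁻¹^n * (-r)^j * ((j + (n-1)).choose (n-1) : ℂ))
        * Complex.exp ((((m - n - 2*j : ℤ)):ℂ) * Complex.I * θ) := by
    funext j
    rw [hx_def, mul_pow, ← Complex.exp_nat_mul,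
      show (((m - n - 2*j : ℤ)):ℂ) * Complex.I * θ
        = ((m:ℂ) - n) * Complex.I * θ + (j:ℂ) * -(2 * Complex.I * θ) by push_cast; ring,
      Complex.exp_add]
    ring
  rw [hfe] at hS
  have he1n : (Complex.exp (Complex.I * (θ:ℂ)))^n = Complex.exp ((n:ℂ) * (Complex.I * θ)) :=
    (Complex.exp_nat_mul _ n).symm
  have hee : Complex.exp (Complex.I * (θ:ℂ)) * Complex.exp (-(2 * Complex.I * (θ:ℂ)))
      = Complex.exp (-(Complex.I * θ)) := by
    rw [← Complex.exp_add]; ring_nf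
  have hz : (a:ℂ) * (Real.cos θ:ℂ) + Complex.I * c * (Real.sin θ:ℂ)
      = A * Complex.exp (Complex.I * θ) * (1 - x) := by
    rw [ellipse_z a c θ, hx_def]
    linear_combination (-(A*r)) * hee - Complex.exp (-(Complex.I * (θ:ℂ))) * hAr
  have hKi : Complex.exp (((m:ℂ) - n) * Complex.I * θ)
      = Complex.exp ((m:ℂ) * Complex.I * θ) / Complex.exp ((n:ℂ) * (Complex.I * θ)) := by
    rw [eq_div_iff (Complex.exp_ne_zero _), ← Complex.exp_add]
    ring_nf
  have hb : A⁻¹^n * Complex.exp (((m:ℂ) - n) * Complex.I * θ) * (1/(1-x)^n)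
      = ((a:ℂ) * (Real.cos θ:ℂ) + Complex.I * c * (Real.sin θ:ℂ)) ^ (-(n:ℤ))
        * Complex.exp ((m:ℂ) * Complex.I * θ) := by
    rw [hz, zpow_neg, zpow_natCast, mul_pow, mul_pow, he1n, mul_inv, mul_inv, hKi, inv_pow]
    ring
  rw [← hb]
  exact hS

/-- Let `a > c > 0` and let `ν` be the measure on the ellipse
`∂U = {a cosθ + i c sinθ}` given by `dν = (c₀ + 2c₁ cos 2θ)dθ`. Then for `n ∈ ℕ`,
`∫_{∂U} z^{−n} dν` equals `2π c₀` if `n = 0`, `8π c₁/(a+c)²` if `n = 2`, and `0` otherwise. -/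
theorem inverse_moments_of_ellipse_measure
    (a c : ℝ) (hc : 0 < c) (hca : c < a) (c₀ c₁ : ℝ) (n : ℕ) :
    ∫ θ in (-Real.pi)..Real.pi,
        ((a : ℂ) * (Real.cos θ : ℂ) + Complex.I * (c : ℂ) * (Real.sin θ : ℂ)) ^ (-(n : ℤ)) *
          ((c₀ : ℂ) + 2 * (c₁ : ℂ) * (Real.cos (2 * θ) : ℂ))
      = if n = 0 then ((2 * Real.pi * c₀ : ℝ) : ℂ)
        else if n = 2 then ((8 * Real.pi * c₁ : ℝ) : ℂ) / (((a + c) ^ 2 : ℝ) : ℂ)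
        else 0 := by
  have hπ := Real.pi_pos
  set F : ℤ → ℝ → ℂ := fun m θ =>
    ((a : ℂ) * (Real.cos θ : ℂ) + Complex.I * c * (Real.sin θ : ℂ)) ^ (-(n : ℤ))
      * Complex.exp ((m:ℂ) * Complex.I * θ) with hF_def
  have hzc : Continuous (fun θ:ℝ => (a : ℂ) * (Real.cos θ : ℂ) + Complex.I * c * (Real.sin θ : ℂ)) := by
    fun_prop
  have hzpow : ∀ θ:ℝ, ((a : ℂ) * (Real.cos θ : ℂ) + Complex.I * c * (Real.sin θ : ℂ)) ^ (-(n:ℤ))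
      = (((a : ℂ) * (Real.cos θ : ℂ) + Complex.I * c * (Real.sin θ : ℂ))⁻¹) ^ n := by
    intro θ
    rw [zpow_neg, zpow_natCast, inv_pow]
  have hFcont : ∀ m : ℤ, Continuous (F m) := by
    intro m
    rw [hF_def]
    simp only
    have h1 : Continuous (fun θ:ℝ =>
        ((a : ℂ) * (Real.cos θ : ℂ) + Complex.I * c * (Real.sin θ : ℂ)) ^ (-(n:ℤ))) := by
      simp only [hzpow]
      exact (hzc.inv₀ (ellipse_z_ne_zero a c hc hca)).pow n
    exact h1.mul (Complex.continuous_exp.comp (continuous_const.mul Complex.continuous_ofReal))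
  have hFint : ∀ m : ℤ, IntervalIntegrable (F m) volume (-Real.pi) Real.pi :=
    fun m => (hFcont m).intervalIntegrable _ _
  have hcos2 : ∀ θ:ℝ, ((c₀:ℂ) + 2*(c₁:ℂ)*(Real.cos (2*θ):ℂ))
      = c₀ * Complex.exp (((0:ℤ):ℂ) * Complex.I * θ) + c₁ * Complex.exp (((2:ℤ):ℂ) * Complex.I * θ)
        + c₁ * Complex.exp (((-2:ℤ):ℂ) * Complex.I * θ) := by
    intro θ
    have e1 : Complex.exp (((2:ℤ):ℂ) * Complex.I * θ)
        = Complex.cos (2*θ) + Complex.sin (2*θ) * Complex.I := by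
      rw [show ((2:ℤ):ℂ) * Complex.I * θ = ((2*θ:ℝ):ℂ) * Complex.I by push_cast; ring,
        Complex.exp_mul_I]
      norm_num
    have e2 : Complex.exp (((-2:ℤ):ℂ) * Complex.I * θ)
        = Complex.cos (2*θ) - Complex.sin (2*θ) * Complex.I := by
      rw [show ((-2:ℤ):ℂ) * Complex.I * θ = ((-(2*θ):ℝ):ℂ) * Complex.I by push_cast; ring,
        Complex.exp_mul_I, Complex.ofReal_neg, Complex.cos_neg, Complex.sin_neg]
      push_cast
      ring
    have e0 : Complex.exp (((0:ℤ):ℂ) * Complex.I * θ) = 1 := by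
      norm_num
    rw [e0, e1, e2, Complex.ofReal_cos]
    push_cast
    ring
  have hsplit : (∫ θ in (-Real.pi)..Real.pi,
      ((a : ℂ) * (Real.cos θ : ℂ) + Complex.I * c * (Real.sin θ : ℂ)) ^ (-(n : ℤ)) *
        ((c₀ : ℂ) + 2 * (c₁ : ℂ) * (Real.cos (2 * θ) : ℂ)))
      = c₀ * (∫ θ in (-Real.pi)..Real.pi, F 0 θ) + c₁ * (∫ θ in (-Real.pi)..Real.pi, F 2 θ)
        + c₁ * (∫ θ in (-Real.pi)..Real.pi, F (-2) θ) := by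
    rw [intervalIntegral.integral_congr (g := fun θ => c₀ * F 0 θ + c₁ * F 2 θ + c₁ * F (-2) θ)
      (fun θ _ => by simp only [hF_def]; rw [hcos2 θ]; ring)]
    rw [intervalIntegral.integral_add (((hFint 0).const_mul c₀).add ((hFint 2).const_mul c₁))
        ((hFint (-2)).const_mul c₁),
      intervalIntegral.integral_add ((hFint 0).const_mul c₀) ((hFint 2).const_mul c₁),
      intervalIntegral.integral_const_mul, intervalIntegral.integral_const_mul,
      intervalIntegral.integral_const_mul]
  rcases eq_or_ne n 0 with hn | hn
  · subst hn
    have hFval : ∀ m : ℤ, (∫ θ in (-Real.pi)..Real.pi, F m θ)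
        = if m = 0 then (2*Real.pi:ℂ) else 0 := by
      intro m
      rw [hF_def]
      simp only [Nat.cast_zero, neg_zero, zpow_zero, one_mul]
      exact fourier_int m
    rw [hsplit, hFval 0, hFval 2, hFval (-2)]
    norm_num
    ring
  · have h0 : (∫ θ in (-Real.pi)..Real.pi, F 0 θ) = 0 := by
      simp only [hF_def]
      rw [aux_int a c hc hca n hn 0]
      have hno : ∀ j:ℕ, ¬((0:ℤ) - n - 2*j = 0) := by intro j; omega
      calc (∑' j : ℕ, _) = ∑' _j : ℕ, (0:ℂ) :=
            tsum_congr fun j => by rw [if_neg (hno j), mul_zero]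
        _ = 0 := tsum_zero
    have hm2 : (∫ θ in (-Real.pi)..Real.pi, F (-2) θ) = 0 := by
      simp only [hF_def]
      rw [aux_int a c hc hca n hn (-2)]
      have hno : ∀ j:ℕ, ¬((-2:ℤ) - n - 2*j = 0) := by intro j; omega
      calc (∑' j : ℕ, _) = ∑' _j : ℕ, (0:ℂ) :=
            tsum_congr fun j => by rw [if_neg (hno j), mul_zero]
        _ = 0 := tsum_zero
    rcases eq_or_ne n 2 with hn2 | hn2
    · subst hn2
      have h2 : (∫ θ in (-Real.pi)..Real.pi, F 2 θ)
          = ((((a+c)/2 : ℝ):ℂ))⁻¹^2 * (2*Real.pi:ℂ) := by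
        simp only [hF_def]
        rw [aux_int a c hc hca 2 hn 2]
        rw [tsum_eq_single 0 (fun j hj => by
          rw [if_neg (by omega), mul_zero])]
        norm_num
      rw [hsplit, h0, hm2, h2]
      have hac : a + c ≠ 0 := by intro h; linarith
      have hac' : ((a:ℂ) + c) ≠ 0 := by
        rw [← Complex.ofReal_add]
        exact_mod_cast hac
      norm_num
      field_simp
      ring
    · have h2 : (∫ θ in (-Real.pi)..Real.pi, F 2 θ) = 0 := by
        simp only [hF_def]
        rw [aux_int a c hc hca n hn 2]
        have hno : ∀ j:ℕ, ¬((2:ℤ) - n - 2*j = 0) := by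
          intro j
          have h1 : n ≠ 0 := hn
          have h1' : n ≠ 2 := hn2
          omega
        calc (∑' j : ℕ, _) = ∑' _j : ℕ, (0:ℂ) :=
              tsum_congr fun j => by rw [if_neg (hno j), mul_zero]
          _ = 0 := tsum_zero
      rw [hsplit, h0, hm2, h2]
      rw [if_neg hn, if_neg hn2]
      ring
end

section
/- For every real β > 0 and τ ∈ [0,1): ∫_{-π}^{π} (1 − τ cos(2θ)) · R(θ)⁴ dθ = ac·π·(a²(1−τ) + c²(1+τ)), where a > c > 0 are given, τ_{a,c} := (a²−c²)/(a²+c²), and R(θ) := √((a²+c²)/2) · √(1−τ_{a,c}²)/√(1−τ_{a,c} cos(2θ)). -/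
open Real

set_option maxHeartbeats 1000000 in
lemma key_integral (t τ : ℝ) (ht0 : 0 ≤ t) (ht1 : t < 1) :
    ∫ θ in (-π)..π, (1 - τ * cos (2 * θ)) / (1 - t * cos (2 * θ)) ^ 2
      = 2 * π * (1 - t * τ) / ((1 - t ^ 2) * Real.sqrt (1 - t ^ 2)) := by
  have ht2 : (0:ℝ) < 1 - t ^ 2 := by nlinarith
  set s : ℝ := Real.sqrt (1 - t ^ 2) with hs_def
  have hs : 0 < s := Real.sqrt_pos.mpr ht2
  have hs2 : s ^ 2 = 1 - t ^ 2 := Real.sq_sqrt ht2.le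
  set m : ℝ := t / (1 + s) with hm_def
  have h1s : (0:ℝ) < 1 + s := by linarith
  have hm0 : 0 ≤ m := div_nonneg ht0 h1s.le
  have hm1 : m < 1 := by
    rw [hm_def, div_lt_one h1s]; linarith
  have hmt : t * (1 + m ^ 2) = 2 * m := by
    rw [hm_def]; field_simp; linear_combination (t * (1 + s) - t * s) * hs2
  have hms : s * (1 + m ^ 2) = 1 - m ^ 2 := by
    rw [hm_def]; field_simp; linear_combination (s + 1) * hs2
  clear_value m
  clear_value s
  set A : ℝ := (1 - t * τ) / (1 - t ^ 2) with hA_def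
  set B : ℝ := (t - τ) / (2 * (1 - t ^ 2)) with hB_def
  set F : ℝ → ℝ := fun θ =>
    (A / s) * (θ + arctan (m * sin (2 * θ) / (1 - m * cos (2 * θ))))
      + B * (sin (2 * θ) / (1 - t * cos (2 * θ))) with hF_def
  have hdenm : ∀ θ : ℝ, 0 < 1 - m * cos (2 * θ) := by
    intro θ
    nlinarith [Real.neg_one_le_cos (2*θ), Real.cos_le_one (2*θ), hm0, hm1]
  have hdent : ∀ θ : ℝ, 0 < 1 - t * cos (2 * θ) := by
    intro θ
    nlinarith [Real.neg_one_le_cos (2*θ), Real.cos_le_one (2*θ), ht0, ht1]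
  have hderiv : ∀ θ : ℝ, HasDerivAt F
      ((1 - τ * cos (2 * θ)) / (1 - t * cos (2 * θ)) ^ 2) θ := by
    intro θ
    have hpyth : sin (2 * θ) ^ 2 = 1 - cos (2 * θ) ^ 2 := by
      nlinarith [Real.sin_sq_add_cos_sq (2 * θ)]
    have hdm := (hdenm θ).ne'
    have hdt := (hdent θ).ne'
    have h2 : HasDerivAt (fun θ : ℝ => 2 * θ) 2 θ := by
      simpa using (hasDerivAt_id θ).const_mul 2
    have hsin : HasDerivAt (fun θ : ℝ => sin (2 * θ)) (cos (2 * θ) * 2) θ :=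
      (Real.hasDerivAt_sin (2 * θ)).comp θ h2
    have hcos : HasDerivAt (fun θ : ℝ => cos (2 * θ)) (-sin (2 * θ) * 2) θ :=
      (Real.hasDerivAt_cos (2 * θ)).comp θ h2
    have hu : HasDerivAt (fun θ : ℝ => m * sin (2 * θ) / (1 - m * cos (2 * θ)))
        ((m * (cos (2 * θ) * 2) * (1 - m * cos (2 * θ)) -
          m * sin (2 * θ) * (-(m * (-sin (2 * θ) * 2)))) / (1 - m * cos (2 * θ)) ^ 2) θ :=
      (hsin.const_mul m).div ((hcos.const_mul m).const_sub 1) hdm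
    have hQ : (0:ℝ) < 1 + m ^ 2 - 2 * m * cos (2 * θ) := by
      nlinarith [Real.neg_one_le_cos (2*θ), Real.cos_le_one (2*θ), hm0, hm1]
    -- first piece: θ + arctan(u θ), derivative s / (1 - t cos 2θ)
    have hd1 : HasDerivAt
        (fun θ : ℝ => θ + arctan (m * sin (2 * θ) / (1 - m * cos (2 * θ))))
        (s / (1 - t * cos (2 * θ))) θ := by
      convert (hasDerivAt_id θ).add hu.arctan using 1
      · rfl
      · rfl
      · rfl
      have h1s' : (1:ℝ) + s ≠ 0 := h1s.ne'
      have hd3 : (1:ℝ) + s - t * cos (2 * θ) ≠ 0 := by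
        nlinarith [Real.cos_le_one (2*θ), Real.neg_one_le_cos (2*θ)]
      have hd4 : (1:ℝ) + (t * sin (2 * θ)) ^ 2 / (1 + s - t * cos (2 * θ)) ^ 2 ≠ 0 := by
        positivity
      have k1 : 1 + (m * sin (2 * θ) / (1 - m * cos (2 * θ))) ^ 2
          = (1 + m ^ 2 - 2 * m * cos (2 * θ)) / (1 - m * cos (2 * θ)) ^ 2 := by
        rw [eq_div_iff (by positivity), add_mul, div_pow, div_mul_cancel₀ _ (pow_ne_zero 2 hdm)]
        linear_combination m ^ 2 * hpyth
      have k2 : m * (cos (2 * θ) * 2) * (1 - m * cos (2 * θ)) -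
          m * sin (2 * θ) * (-(m * (-sin (2 * θ) * 2))) = 2 * m * (cos (2 * θ) - m) := by
        linear_combination (-2 * m ^ 2) * hpyth
      rw [k1, k2]
      have hQne := hQ.ne'
      have k3 : s / (1 - t * cos (2 * θ)) = (1 - m ^ 2) / (1 + m ^ 2 - 2 * m * cos (2 * θ)) := by
        rw [div_eq_div_iff hdt hQne]
        linear_combination (1 - t * cos (2 * θ)) * hms + s * cos (2 * θ) * hmt
      rw [k3, one_div_div, div_mul_div_comm, mul_comm (1 + m ^ 2 - 2 * m * cos (2 * θ)),
        mul_div_mul_left _ _ (pow_ne_zero 2 hdm), one_add_div hQne]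
      congr 1
      ring
    have hfirst := hd1.const_mul (A / s)
    have hsnd : HasDerivAt (fun θ : ℝ => B * (sin (2 * θ) / (1 - t * cos (2 * θ))))
        (B * ((cos (2 * θ) * 2 * (1 - t * cos (2 * θ)) -
          sin (2 * θ) * (-(t * (-sin (2 * θ) * 2)))) / (1 - t * cos (2 * θ)) ^ 2)) θ :=
      (hsin.div ((hcos.const_mul t).const_sub 1) hdt).const_mul B
    have hF := hfirst.add hsnd
    convert hF using 1
    · rfl
    · rfl
    · rfl
    have k4 : cos (2 * θ) * 2 * (1 - t * cos (2 * θ)) -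
        sin (2 * θ) * (-(t * (-sin (2 * θ) * 2))) = 2 * (cos (2 * θ) - t) := by
      linear_combination (-2 * t) * hpyth
    rw [k4]
    rw [hA_def, hB_def]
    have hsne : s ≠ 0 := hs.ne'
    have ht2ne : (1 - t ^ 2) ≠ 0 := ht2.ne'
    field_simp
    ring
  have hcont : Continuous (fun θ : ℝ => (1 - τ * cos (2 * θ)) / (1 - t * cos (2 * θ)) ^ 2) := by
    apply Continuous.div
    · continuity
    · continuity
    · intro θ; exact pow_ne_zero 2 (hdent θ).ne'
  have hInt := intervalIntegral.integral_eq_sub_of_hasDerivAt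
    (fun θ _ => hderiv θ) (hcont.intervalIntegrable (-π) π)
  rw [hInt]
  have h2pi : sin (2 * π) = 0 := Real.sin_two_pi
  have h2pi' : sin (2 * (-π)) = 0 := by
    rw [mul_neg, Real.sin_neg, Real.sin_two_pi, neg_zero]
  rw [hF_def]
  simp only [h2pi, h2pi', mul_zero, zero_mul, zero_div, Real.arctan_zero, add_zero]
  rw [hA_def]
  field_simp
  ring

/-- For every real `β > 0` and `τ ∈ [0,1)`, with `a > c > 0`,
`τ_{a,c} := (a²−c²)/(a²+c²)` and
`R(θ) := √((a²+c²)/2)·√(1−τ_{a,c}²)/√(1−τ_{a,c} cos 2θ)`: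
`∫_{-π}^{π} (1 − τ cos 2θ) R(θ)⁴ dθ = acπ(a²(1−τ) + c²(1+τ))`. -/
theorem integral_one_sub_tau_cos_R_pow_four
    (β τ a c : ℝ) (hβ : 0 < β) (hτ0 : 0 ≤ τ) (hτ1 : τ < 1) (hc : 0 < c) (hca : c < a) :
    let τac : ℝ := (a ^ 2 - c ^ 2) / (a ^ 2 + c ^ 2)
    (∫ θ in (-Real.pi)..Real.pi,
        (1 - τ * Real.cos (2 * θ)) *
          (Real.sqrt ((a ^ 2 + c ^ 2) / 2) * Real.sqrt (1 - τac ^ 2) /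
            Real.sqrt (1 - τac * Real.cos (2 * θ))) ^ 4)
      = a * c * Real.pi * (a ^ 2 * (1 - τ) + c ^ 2 * (1 + τ)) := by
  intro τac
  have ha : 0 < a := hc.trans hca
  have hden : (0:ℝ) < a ^ 2 + c ^ 2 := by positivity
  have ht0 : 0 ≤ τac := div_nonneg (by nlinarith) hden.le
  have ht1 : τac < 1 := by
    rw [show τac = (a ^ 2 - c ^ 2) / (a ^ 2 + c ^ 2) from rfl, div_lt_one hden]
    nlinarith
  have ht2 : (0:ℝ) < 1 - τac ^ 2 := by nlinarith
  have hX : (0:ℝ) ≤ (a ^ 2 + c ^ 2) / 2 := by positivity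
  have hZ : ∀ θ : ℝ, 0 < 1 - τac * Real.cos (2 * θ) := by
    intro θ
    nlinarith [Real.neg_one_le_cos (2*θ), Real.cos_le_one (2*θ)]
  have hstep : (∫ θ in (-Real.pi)..Real.pi,
        (1 - τ * Real.cos (2 * θ)) *
          (Real.sqrt ((a ^ 2 + c ^ 2) / 2) * Real.sqrt (1 - τac ^ 2) /
            Real.sqrt (1 - τac * Real.cos (2 * θ))) ^ 4)
      = ((a ^ 2 + c ^ 2) / 2) ^ 2 * (1 - τac ^ 2) ^ 2 *
          ∫ θ in (-Real.pi)..Real.pi,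
            (1 - τ * Real.cos (2 * θ)) / (1 - τac * Real.cos (2 * θ)) ^ 2 := by
    rw [← intervalIntegral.integral_const_mul]
    apply intervalIntegral.integral_congr
    intro θ _
    have e1 : Real.sqrt ((a ^ 2 + c ^ 2) / 2) ^ 4 = ((a ^ 2 + c ^ 2) / 2) ^ 2 := by
      rw [show (4:ℕ) = 2 * 2 from rfl, pow_mul, Real.sq_sqrt hX]
    have e2 : Real.sqrt (1 - τac ^ 2) ^ 4 = (1 - τac ^ 2) ^ 2 := by
      rw [show (4:ℕ) = 2 * 2 from rfl, pow_mul, Real.sq_sqrt ht2.le]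
    have e3 : Real.sqrt (1 - τac * Real.cos (2 * θ)) ^ 4
        = (1 - τac * Real.cos (2 * θ)) ^ 2 := by
      rw [show (4:ℕ) = 2 * 2 from rfl, pow_mul, Real.sq_sqrt (hZ θ).le]
    simp only [div_pow, mul_pow, e1, e2, e3]
    ring
  rw [hstep, key_integral τac τ ht0 ht1]
  have hsq : Real.sqrt (1 - τac ^ 2) = 2 * a * c / (a ^ 2 + c ^ 2) := by
    rw [show 1 - τac ^ 2 = (2 * a * c / (a ^ 2 + c ^ 2)) ^ 2 by
      rw [show τac = (a ^ 2 - c ^ 2) / (a ^ 2 + c ^ 2) from rfl]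
      field_simp; ring]
    exact Real.sqrt_sq (by positivity)
  have hY : 1 - τac ^ 2 = 4 * a ^ 2 * c ^ 2 / (a ^ 2 + c ^ 2) ^ 2 := by
    rw [show τac = (a ^ 2 - c ^ 2) / (a ^ 2 + c ^ 2) from rfl]
    field_simp; ring
  have hane : a ^ 2 + c ^ 2 ≠ 0 := hden.ne'
  rw [hsq, hY, show τac = (a ^ 2 - c ^ 2) / (a ^ 2 + c ^ 2) from rfl]
  field_simp
  ring
end
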